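/- arXiv:2207.00447 — 8 statements merged into one kernel-verified Lean document; each statement's English description precedes it below -/
import Mathlib

section
/- Let m be a probability measure on ℝ with c.d.f. F_U, and let Y1, Y2 be real-valued random variables. Then the excursion distance E_m(Y1,Y2) := ∫_ℝ [P(Y1>u)+P(Y2>u)-2P(Y1>u,Y2>u)] m(du) equals E|F_U(Y2-) - F_U(Y1-)|, where F_U(x-) denotes the left limit of F_U at x. -/
open MeasureTheory Set

lemma measure_symmDiff_Iio (m : Measure ℝ) [IsFiniteMeasure m] (a b : ℝ) :
    (m (symmDiff (Iio a) (Iio b))).toReal = |(m (Iio b)).toReal - (m (Iio a)).toReal| := by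
  wlog hab : a ≤ b generalizing a b
  · rw [symmDiff_comm, this b a (le_of_not_ge hab), abs_sub_comm]
  have hsub : Iio a ⊆ Iio b := Iio_subset_Iio hab
  rw [symmDiff_of_le hsub,
    measure_diff hsub measurableSet_Iio.nullMeasurableSet (measure_ne_top m _),
    ENNReal.toReal_sub_of_le (measure_mono hsub) (measure_ne_top m _),
    abs_of_nonneg]
  exact sub_nonneg.2 (ENNReal.toReal_mono (measure_ne_top m _) (measure_mono hsub))

lemma toReal_symmDiff {Ω : Type*} [MeasurableSpace Ω] (P : Measure Ω) [IsFiniteMeasure P]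
    (A B : Set Ω) (hA : MeasurableSet A) (hB : MeasurableSet B) :
    (P A).toReal + (P B).toReal - 2 * (P (A ∩ B)).toReal = (P (symmDiff A B)).toReal := by
  have h1 : P A = P (A ∩ B) + P (A \ B) := (measure_inter_add_diff A hB).symm
  have h2 : P B = P (A ∩ B) + P (B \ A) := by
    rw [inter_comm]; exact (measure_inter_add_diff B hA).symm
  have h3 : P (symmDiff A B) = P (A \ B) + P (B \ A) := by
    rw [Set.symmDiff_def]
    exact measure_union disjoint_sdiff_sdiff (hB.diff hA)
  rw [h1, h2, h3, ENNReal.toReal_add (measure_ne_top P _) (measure_ne_top P _),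
    ENNReal.toReal_add (measure_ne_top P _) (measure_ne_top P _),
    ENNReal.toReal_add (measure_ne_top P _) (measure_ne_top P _)]
  ring

theorem stmt2 {Ω : Type*} [MeasurableSpace Ω] (P : Measure Ω) [IsProbabilityMeasure P]
    (m : Measure ℝ) [IsProbabilityMeasure m]
    (Y1 Y2 : Ω → ℝ) (hY1 : Measurable Y1) (hY2 : Measurable Y2) :
    ∫ u, ((P {ω | Y1 ω > u}).toReal + (P {ω | Y2 ω > u}).toReal
        - 2 * (P {ω | Y1 ω > u ∧ Y2 ω > u}).toReal) ∂m
      = ∫ ω, |(m (Set.Iio (Y2 ω))).toReal - (m (Set.Iio (Y1 ω))).toReal| ∂P := by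
  set A : Set (ℝ × Ω) := {p | p.1 < Y1 p.2} with hAdef
  set B : Set (ℝ × Ω) := {p | p.1 < Y2 p.2} with hBdef
  have hA : MeasurableSet A := measurableSet_lt measurable_fst (hY1.comp measurable_snd)
  have hB : MeasurableSet B := measurableSet_lt measurable_fst (hY2.comp measurable_snd)
  set S : Set (ℝ × Ω) := symmDiff A B with hSdef
  have hS : MeasurableSet S := hA.symmDiff hB
  have slice1 : ∀ u : ℝ, Prod.mk u ⁻¹' S = symmDiff {ω | Y1 ω > u} {ω | Y2 ω > u} := by
    intro u; ext ω
    simp [hSdef, hAdef, hBdef, Set.symmDiff_def, Set.mem_diff]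
  have slice2 : ∀ ω : Ω, (fun u => (u, ω)) ⁻¹' S = symmDiff (Iio (Y1 ω)) (Iio (Y2 ω)) := by
    intro ω; ext u
    simp [hSdef, hAdef, hBdef, Set.symmDiff_def, Set.mem_diff]
    tauto
  have step1 : ∫ u, ((P {ω | Y1 ω > u}).toReal + (P {ω | Y2 ω > u}).toReal
        - 2 * (P {ω | Y1 ω > u ∧ Y2 ω > u}).toReal) ∂m
      = ∫ u, (P (Prod.mk u ⁻¹' S)).toReal ∂m := by
    refine integral_congr_ae (Filter.Eventually.of_forall fun u => ?_)
    dsimp only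
    rw [slice1]
    have : {ω | Y1 ω > u ∧ Y2 ω > u} = {ω | Y1 ω > u} ∩ {ω | Y2 ω > u} := rfl
    rw [this]
    exact toReal_symmDiff P _ _ (hY1 measurableSet_Ioi) (hY2 measurableSet_Ioi)
  have step2 : ∫ u, (P (Prod.mk u ⁻¹' S)).toReal ∂m
      = (∫⁻ u, P (Prod.mk u ⁻¹' S) ∂m).toReal := by
    refine integral_toReal (measurable_measure_prodMk_left hS).aemeasurable ?_
    exact Filter.Eventually.of_forall fun u => measure_lt_top P _
  have step3 : ∫⁻ u, P (Prod.mk u ⁻¹' S) ∂m = ∫⁻ ω, m ((fun u => (u, ω)) ⁻¹' S) ∂P := by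
    rw [← Measure.prod_apply hS, Measure.prod_apply_symm hS]
  have step4 : (∫⁻ ω, m ((fun u => (u, ω)) ⁻¹' S) ∂P).toReal
      = ∫ ω, (m ((fun u => (u, ω)) ⁻¹' S)).toReal ∂P := by
    refine (integral_toReal (measurable_measure_prodMk_right hS).aemeasurable ?_).symm
    exact Filter.Eventually.of_forall fun ω => measure_lt_top m _
  rw [step1, step2, step3, step4]
  refine integral_congr_ae (Filter.Eventually.of_forall fun ω => ?_)
  dsimp only
  rw [slice2]
  exact measure_symmDiff_Iio m _ _
end

section
/- Let m be a probability measure on ℝ whose c.d.f. F_U is continuous. Then for real-valued random variables Y1, Y2, the excursion distance E_m(Y1,Y2) equals E|F_U(Y2) - F_U(Y1)|. -/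
open MeasureTheory Set

theorem stmt4 {Ω : Type*} [MeasurableSpace Ω] (P : Measure Ω) [IsProbabilityMeasure P]
    (m : Measure ℝ) [IsProbabilityMeasure m]
    (F_U : ℝ → ℝ) (hF : ∀ x, F_U x = (m (Set.Iic x)).toReal) (hcont : Continuous F_U)
    (Y1 Y2 : Ω → ℝ) (hY1 : Measurable Y1) (hY2 : Measurable Y2) :
    ∫ u, ((P {ω | Y1 ω > u}).toReal + (P {ω | Y2 ω > u}).toReal
        - 2 * (P {ω | Y1 ω > u ∧ Y2 ω > u}).toReal) ∂m
      = ∫ ω, |F_U (Y2 ω) - F_U (Y1 ω)| ∂P := by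
  -- m has no atoms
  have hatom : ∀ x : ℝ, m {x} = 0 := by
    intro x
    have hIoc : ∀ y : ℝ, y ≤ x → (m (Ioc y x)).toReal = F_U x - F_U y := by
      intro y hy
      have hU : Iic y ∪ Ioc y x = Iic x := Iic_union_Ioc_eq_Iic hy
      have hd : Disjoint (Iic y) (Ioc y x) := by
        simp [Set.disjoint_left]
        intro a ha ha'
        linarith
      have := measure_union (μ := m) hd measurableSet_Ioc
      rw [hU] at this
      rw [hF, hF, this, ENNReal.toReal_add (measure_ne_top _ _) (measure_ne_top _ _)]
      ring
    have key : (m {x}).toReal ≤ 0 := by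
      by_contra h
      push_neg at h
      obtain ⟨δ, hδ, hδ'⟩ := Metric.continuous_iff.mp hcont x ((m {x}).toReal) h
      have hle : (m {x}).toReal ≤ F_U x - F_U (x - δ/2) := by
        have hsub : ({x} : Set ℝ) ⊆ Ioc (x - δ/2) x := by
          intro a ha; simp at ha; subst ha; constructor <;> linarith
        have := measure_mono (μ := m) hsub
        have h2 := ENNReal.toReal_mono (measure_ne_top _ _) this
        rwa [hIoc _ (by linarith)] at h2
      have hdist : dist (x - δ/2) x < δ := by
        rw [Real.dist_eq, abs_of_nonpos (by linarith)]; linarith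
      have := hδ' (x - δ/2) hdist
      rw [Real.dist_eq, abs_sub_comm, abs_of_nonneg (by linarith)] at this
      linarith
    have : (m {x}).toReal = 0 := le_antisymm key ENNReal.toReal_nonneg
    exact (ENNReal.toReal_eq_zero_iff _).mp this |>.resolve_right (measure_ne_top _ _)
  have hmono : Monotone F_U := by
    intro a b hab
    rw [hF, hF]
    exact ENNReal.toReal_mono (measure_ne_top _ _) (measure_mono (Iic_subset_Iic.mpr hab))
  -- Ioc and Ico have same measure
  have hIcoIoc : ∀ a b : ℝ, m (Ico a b) = m (Ioc a b) := by
    intro a b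
    rw [← Icc_sdiff_right, ← Icc_sdiff_left, measure_diff_null (hatom b), measure_diff_null (hatom a)]
  have hIoc : ∀ a b : ℝ, a ≤ b → (m (Ioc a b)).toReal = F_U b - F_U a := by
    intro a b hab
    have hU : Iic a ∪ Ioc a b = Iic b := Iic_union_Ioc_eq_Iic hab
    have hd : Disjoint (Iic a) (Ioc a b) := by
      simp [Set.disjoint_left]; intro c hc hc'; linarith
    have := measure_union (μ := m) hd measurableSet_Ioc
    rw [hU] at this
    rw [hF, hF, this, ENNReal.toReal_add (measure_ne_top _ _) (measure_ne_top _ _)]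
    ring
  -- the key set in the product space
  set s : Set (ℝ × Ω) := {p | Xor' (p.1 < Y1 p.2) (p.1 < Y2 p.2)} with hs_def
  have hm1 : MeasurableSet {p : ℝ × Ω | p.1 < Y1 p.2} :=
    measurableSet_lt measurable_fst (hY1.comp measurable_snd)
  have hm2 : MeasurableSet {p : ℝ × Ω | p.1 < Y2 p.2} :=
    measurableSet_lt measurable_fst (hY2.comp measurable_snd)
  have hs : MeasurableSet s := by
    have : s = ({p : ℝ × Ω | p.1 < Y1 p.2} \ {p | p.1 < Y2 p.2}) ∪
        ({p | p.1 < Y2 p.2} \ {p | p.1 < Y1 p.2}) := by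
      ext p
      simp only [hs_def, Set.mem_setOf_eq, Xor', xor_def, Set.mem_union, Set.mem_diff]
    rw [this]
    exact (hm1.diff hm2).union (hm2.diff hm1)
  -- sections over Ω
  have hsec_u : ∀ u : ℝ, Prod.mk u ⁻¹' s =
      ({ω | Y1 ω > u} \ {ω | Y2 ω > u}) ∪ ({ω | Y2 ω > u} \ {ω | Y1 ω > u}) := by
    intro u; ext ω
    simp only [hs_def, Set.mem_preimage, Set.mem_setOf_eq, Xor', xor_def, Set.mem_union, Set.mem_diff,
      gt_iff_lt]
  -- sections over ℝ
  have hsec_ω : ∀ ω : Ω, (fun u => (u, ω)) ⁻¹' s =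
      Ico (min (Y1 ω) (Y2 ω)) (max (Y1 ω) (Y2 ω)) := by
    intro ω; ext u
    simp only [Set.mem_preimage, hs_def, Set.mem_setOf_eq, Xor', Set.mem_Ico,
      le_min_iff, lt_max_iff, min_le_iff]
    constructor
    · rintro (⟨h1, h2⟩ | ⟨h1, h2⟩)
      · exact ⟨Or.inr (le_of_not_gt h2), Or.inl h1⟩
      · exact ⟨Or.inl (le_of_not_gt h2), Or.inr h1⟩
    · rintro ⟨h1, h2⟩
      by_cases hc : u < Y1 ω
      · exact Or.inl ⟨hc, fun hc2 => by rcases h1 with h | h <;> linarith⟩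
      · have hc2 : u < Y2 ω := by
          rcases h2 with h | h
          exacts [absurd h hc, h]
        exact Or.inr ⟨hc2, hc⟩
  -- measurability of the section measures
  have hmeas_u : Measurable fun u => P (Prod.mk u ⁻¹' s) :=
    measurable_measure_prodMk_left hs
  have hmeas_ω : Measurable fun ω => m ((fun u => (u, ω)) ⁻¹' s) :=
    measurable_measure_prodMk_right hs
  -- LHS integrand equals (P (section)).toReal
  have hLHS_pt : ∀ u : ℝ,
      (P {ω | Y1 ω > u}).toReal + (P {ω | Y2 ω > u}).toReal
        - 2 * (P {ω | Y1 ω > u ∧ Y2 ω > u}).toReal = (P (Prod.mk u ⁻¹' s)).toReal := by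
    intro u
    set A1 := {ω | Y1 ω > u}
    set A2 := {ω | Y2 ω > u}
    have hA1 : MeasurableSet A1 := measurableSet_lt measurable_const hY1
    have hA2 : MeasurableSet A2 := measurableSet_lt measurable_const hY2
    have hinter : {ω | Y1 ω > u ∧ Y2 ω > u} = A1 ∩ A2 := rfl
    have hd1 : Disjoint (A1 \ A2) (A1 ∩ A2) := by
      rw [Set.disjoint_left]; rintro a ⟨_, h⟩ ⟨_, h'⟩; exact h h'
    have hd2 : Disjoint (A2 \ A1) (A2 ∩ A1) := by
      rw [Set.disjoint_left]; rintro a ⟨_, h⟩ ⟨_, h'⟩; exact h h'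
    have e1 : P A1 = P (A1 \ A2) + P (A1 ∩ A2) := by
      rw [← measure_union hd1 (hA1.inter hA2), Set.diff_union_inter]
    have e2 : P A2 = P (A2 \ A1) + P (A1 ∩ A2) := by
      rw [Set.inter_comm A1 A2, ← measure_union hd2 (hA2.inter hA1), Set.diff_union_inter]
    have e3 : P (Prod.mk u ⁻¹' s) = P (A1 \ A2) + P (A2 \ A1) := by
      rw [hsec_u u]
      exact measure_union (disjoint_sdiff_sdiff) (hA2.diff hA1)
    rw [hinter, e1, e2, e3, ENNReal.toReal_add (measure_ne_top _ _) (measure_ne_top _ _),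
      ENNReal.toReal_add (measure_ne_top _ _) (measure_ne_top _ _),
      ENNReal.toReal_add (measure_ne_top _ _) (measure_ne_top _ _)]
    ring
  -- RHS integrand equals (m (section)).toReal
  have hRHS_pt : ∀ ω : Ω, |F_U (Y2 ω) - F_U (Y1 ω)| = (m ((fun u => (u, ω)) ⁻¹' s)).toReal := by
    intro ω
    rw [hsec_ω ω, hIcoIoc, hIoc _ _ (min_le_max)]
    rcases le_total (Y1 ω) (Y2 ω) with h | h
    · rw [min_eq_left h, max_eq_right h, abs_of_nonneg (by linarith [hmono h])]
    · rw [min_eq_right h, max_eq_left h, abs_of_nonpos (by linarith [hmono h])]; ring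
  calc ∫ u, ((P {ω | Y1 ω > u}).toReal + (P {ω | Y2 ω > u}).toReal
        - 2 * (P {ω | Y1 ω > u ∧ Y2 ω > u}).toReal) ∂m
      = ∫ u, (P (Prod.mk u ⁻¹' s)).toReal ∂m := by
        exact integral_congr_ae (Filter.Eventually.of_forall hLHS_pt)
    _ = (∫⁻ u, P (Prod.mk u ⁻¹' s) ∂m).toReal := by
        rw [integral_toReal hmeas_u.aemeasurable
          (Filter.Eventually.of_forall fun u => measure_lt_top _ _)]
    _ = ((m.prod P) s).toReal := by rw [Measure.prod_apply hs]
    _ = (∫⁻ ω, m ((fun u => (u, ω)) ⁻¹' s) ∂P).toReal := by rw [Measure.prod_apply_symm hs]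
    _ = ∫ ω, (m ((fun u => (u, ω)) ⁻¹' s)).toReal ∂P := by
        rw [integral_toReal hmeas_ω.aemeasurable
          (Filter.Eventually.of_forall fun ω => measure_lt_top _ _)]
    _ = ∫ ω, |F_U (Y2 ω) - F_U (Y1 ω)| ∂P := by
        exact integral_congr_ae (Filter.Eventually.of_forall fun ω => (hRHS_pt ω).symm)
end

section
/- Let m be a probability measure on ℝ and S ⊆ ℝ. If the c.d.f. F_U of m is strictly increasing on S, then E_m(Y1,Y2) := E|F_U(Y2-) - F_U(Y1-)| defines a metric on the space of random variables with values in S almost surely (identifying a.s. equal random variables): it is symmetric, satisfies the triangle inequality, and E_m(Y1,Y2)=0 implies Y1=Y2 almost surely. -/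
open MeasureTheory Set

theorem stmt5 {Ω : Type*} [MeasurableSpace Ω] (P : Measure Ω) [IsProbabilityMeasure P]
    (m : Measure ℝ) [IsProbabilityMeasure m] (S : Set ℝ)
    (F_U : ℝ → ℝ) (hF : ∀ x, F_U x = (m (Set.Iio x)).toReal)
    (hmono : StrictMonoOn F_U S)
    (Y1 Y2 : Ω → ℝ) (hY1 : Measurable Y1) (hY2 : Measurable Y2)
    (hS1 : ∀ᵐ ω ∂P, Y1 ω ∈ S) (hS2 : ∀ᵐ ω ∂P, Y2 ω ∈ S) :
    (∫ ω, |F_U (Y2 ω) - F_U (Y1 ω)| ∂P = ∫ ω, |F_U (Y1 ω) - F_U (Y2 ω)| ∂P) ∧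
    (∀ Y3 : Ω → ℝ, Measurable Y3 →
      ∫ ω, |F_U (Y2 ω) - F_U (Y1 ω)| ∂P
        ≤ ∫ ω, |F_U (Y3 ω) - F_U (Y1 ω)| ∂P + ∫ ω, |F_U (Y2 ω) - F_U (Y3 ω)| ∂P) ∧
    (∫ ω, |F_U (Y2 ω) - F_U (Y1 ω)| ∂P = 0 → Y1 =ᵐ[P] Y2) := by
  -- F_U is monotone
  have hFmono : Monotone F_U := by
    intro x y hxy
    rw [hF, hF]
    exact ENNReal.toReal_mono (measure_ne_top m _) (measure_mono (Iio_subset_Iio hxy))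
  have hFmeas : Measurable F_U := hFmono.measurable
  -- bounds on F_U
  have hF01 : ∀ x, 0 ≤ F_U x ∧ F_U x ≤ 1 := by
    intro x
    rw [hF]
    refine ⟨ENNReal.toReal_nonneg, ?_⟩
    have : m (Set.Iio x) ≤ 1 := prob_le_one
    exact_mod_cast ENNReal.toReal_le_of_le_ofReal one_pos.le (by simpa using this)
  have hbound : ∀ a b : ℝ, |F_U a - F_U b| ≤ 1 := by
    intro a b
    rw [abs_sub_le_iff]
    constructor <;> linarith [(hF01 a).1, (hF01 a).2, (hF01 b).1, (hF01 b).2]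
  -- integrability
  have hint : ∀ (A B : Ω → ℝ), Measurable A → Measurable B →
      Integrable (fun ω => |F_U (A ω) - F_U (B ω)|) P := by
    intro A B hA hB
    refine Integrable.mono' (integrable_const 1)
      (((hFmeas.comp hA).sub (hFmeas.comp hB)).abs.aestronglyMeasurable) ?_
    filter_upwards with ω
    simpa using hbound (A ω) (B ω)
  refine ⟨?_, ?_, ?_⟩
  · simp_rw [abs_sub_comm]
  · intro Y3 hY3
    rw [← integral_add (hint Y3 Y1 hY3 hY1) (hint Y2 Y3 hY2 hY3)]
    refine integral_mono (hint Y2 Y1 hY2 hY1)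
      ((hint Y3 Y1 hY3 hY1).add (hint Y2 Y3 hY2 hY3)) ?_
    intro ω
    simpa using abs_sub_le (F_U (Y2 ω)) (F_U (Y3 ω)) (F_U (Y1 ω)) |>.trans_eq (by ring)
  · intro h0
    have := (integral_eq_zero_iff_of_nonneg (fun ω => abs_nonneg _)
      (hint Y2 Y1 hY2 hY1)).mp h0
    filter_upwards [this, hS1, hS2] with ω hω h1 h2
    have : F_U (Y1 ω) = F_U (Y2 ω) := by
      have := abs_eq_zero.mp hω
      linarith
    exact (hmono.injOn h1 h2 this).symm ▸ rfl
end

section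
/- Let Y1, Y2 be identically distributed with common continuous, strictly increasing c.d.f. F1 and copula C. Then E_{F1}(Y1,Y2) := E|F1(Y2)-F1(Y1)| equals 1 - 2∫_0^1 C(x,x) dx. -/
open MeasureTheory Set

open Filter Topology Function in
private lemma aux_ind_int (c : ℝ) (hc0 : 0 ≤ c) (hc1 : c ≤ 1) :
    ∫ x in Ioc (0:ℝ) 1, (if c ≤ x then (1:ℝ) else 0) = 1 - c := by
  have h1 : (fun x : ℝ => if c ≤ x then (1:ℝ) else 0)
      = (Ici c).indicator (fun _ => (1:ℝ)) := by
    funext x; simp [Set.indicator_apply]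
  rw [h1, setIntegral_indicator measurableSet_Ici, setIntegral_const]
  have hv : volume (Ioc (0:ℝ) 1 ∩ Ici c) = ENNReal.ofReal (1 - c) := by
    apply le_antisymm
    · calc volume (Ioc (0:ℝ) 1 ∩ Ici c) ≤ volume (Icc c 1) := by
            apply measure_mono; rintro x ⟨⟨hx0, hx1⟩, hxc⟩; exact ⟨hxc, hx1⟩
        _ = ENNReal.ofReal (1 - c) := by rw [Real.volume_Icc]
    · calc ENNReal.ofReal (1 - c) = volume (Ioc c 1) := (Real.volume_Ioc).symm
        _ ≤ volume (Ioc (0:ℝ) 1 ∩ Ici c) := by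
            apply measure_mono; rintro x ⟨hxc, hx1⟩
            exact ⟨⟨lt_of_le_of_lt hc0 hxc, hx1⟩, le_of_lt hxc⟩
  rw [measureReal_def, hv, ENNReal.toReal_ofReal (by linarith)]
  simp

private lemma aux_fin : IsFiniteMeasure (volume.restrict (Ioc (0:ℝ) 1)) := by
  constructor
  rw [Measure.restrict_apply_univ, Real.volume_Ioc]
  exact ENNReal.ofReal_lt_top

open Filter Topology Function in
private lemma aux_ind_integrable (c : ℝ) :
    Integrable (fun x => if c ≤ x then (1:ℝ) else 0) (volume.restrict (Ioc (0:ℝ) 1)) := by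
  have h1 : (fun x : ℝ => if c ≤ x then (1:ℝ) else 0)
      = (Ici c).indicator (fun _ => (1:ℝ)) := by
    funext x; simp [Set.indicator_apply]
  rw [h1]
  haveI := aux_fin
  exact (integrable_const 1).indicator measurableSet_Ici

private lemma aux_int_ind {Ω : Type*} [MeasurableSpace Ω] (P : Measure Ω)
    [IsProbabilityMeasure P] (s : Set Ω) (hs : MeasurableSet s) :
    ∫ ω, s.indicator (fun _ => (1:ℝ)) ω ∂P = (P s).toReal := by
  rw [integral_indicator_const (1:ℝ) hs]
  simp
  rfl

open Filter Topology Function in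
theorem stmt10 {Ω : Type*} [MeasurableSpace Ω] (P : Measure Ω) [IsProbabilityMeasure P]
    (Y1 Y2 : Ω → ℝ) (hY1 : Measurable Y1) (hY2 : Measurable Y2)
    (F1 : ℝ → ℝ) (C : ℝ → ℝ → ℝ)
    (hF1 : ∀ x, F1 x = (P {ω | Y1 ω ≤ x}).toReal)
    (hid : ∀ x, (P {ω | Y2 ω ≤ x}).toReal = F1 x)
    (hF1c : Continuous F1) (hmono : StrictMono F1)
    (hSklar : ∀ s t, (P {ω | Y1 ω ≤ s ∧ Y2 ω ≤ t}).toReal = C (F1 s) (F1 t)) :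
    ∫ ω, |F1 (Y2 ω) - F1 (Y1 ω)| ∂P = 1 - 2 * ∫ x in (0:ℝ)..1, C x x := by
  classical
  haveI := aux_fin
  have hmF : Measurable F1 := hF1c.measurable
  set ν : Measure ℝ := volume.restrict (Ioc (0:ℝ) 1) with hν
  -- bounds on F1
  have hbd : ∀ x, 0 ≤ F1 x ∧ F1 x ≤ 1 := by
    intro x
    rw [hF1 x]
    refine ⟨ENNReal.toReal_nonneg, ?_⟩
    have h1 : P {ω | Y1 ω ≤ x} ≤ 1 := prob_le_one
    calc (P {ω | Y1 ω ≤ x}).toReal ≤ (1 : ENNReal).toReal :=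
          ENNReal.toReal_mono (by simp) h1
      _ = 1 := by simp
  -- limits of F1
  have hmap : ∀ x, F1 x = ((P.map Y1) (Iic x)).toReal := by
    intro x
    rw [Measure.map_apply hY1 measurableSet_Iic, hF1 x]
    rfl
  haveI : IsProbabilityMeasure (P.map Y1) := Measure.isProbabilityMeasure_map hY1.aemeasurable
  have hcdf : F1 = ProbabilityTheory.cdf (P.map Y1) := by
    funext x
    rw [ProbabilityTheory.cdf_eq_real, measureReal_def, hmap]
  have htop : Tendsto F1 atTop (𝓝 1) := by
    rw [hcdf]; exact ProbabilityTheory.tendsto_cdf_atTop _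
  have hbot : Tendsto F1 atBot (𝓝 0) := by
    rw [hcdf]; exact ProbabilityTheory.tendsto_cdf_atBot _
  -- surjectivity onto (0,1)
  have hsurj : ∀ x ∈ Ioo (0:ℝ) 1, ∃ s, F1 s = x := by
    intro x hx
    obtain ⟨M, hM⟩ := (htop.eventually (eventually_gt_nhds hx.2)).exists
    obtain ⟨m, hm⟩ := (hbot.eventually (eventually_lt_nhds hx.1)).exists
    have hmem : x ∈ uIcc (F1 m) (F1 M) := by
      rw [mem_uIcc]; left; exact ⟨le_of_lt hm, le_of_lt hM⟩
    have := intermediate_value_uIcc (f := F1) (a := m) (b := M) hF1c.continuousOn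
    obtain ⟨s, _, hs⟩ := this hmem
    exact ⟨s, hs⟩
  -- the product-set function
  set f : Ω → ℝ → ℝ := fun ω x =>
    (if F1 (Y1 ω) ≤ x then (1:ℝ) else 0) + (if F1 (Y2 ω) ≤ x then (1:ℝ) else 0)
      - 2 * (if F1 (Y1 ω) ≤ x ∧ F1 (Y2 ω) ≤ x then (1:ℝ) else 0) with hf
  have ha_m : Measurable fun ω => F1 (Y1 ω) := hmF.comp hY1
  have hb_m : Measurable fun ω => F1 (Y2 ω) := hmF.comp hY2
  have hA : MeasurableSet {p : Ω × ℝ | F1 (Y1 p.1) ≤ p.2} :=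
    measurableSet_le (ha_m.comp measurable_fst) measurable_snd
  have hB : MeasurableSet {p : Ω × ℝ | F1 (Y2 p.1) ≤ p.2} :=
    measurableSet_le (hb_m.comp measurable_fst) measurable_snd
  -- integrability on the product
  have hIA : Integrable (fun p : Ω × ℝ => if F1 (Y1 p.1) ≤ p.2 then (1:ℝ) else 0) (P.prod ν) := by
    have : (fun p : Ω × ℝ => if F1 (Y1 p.1) ≤ p.2 then (1:ℝ) else 0)
        = ({p : Ω × ℝ | F1 (Y1 p.1) ≤ p.2}).indicator (fun _ => (1:ℝ)) := by
      funext p; simp [Set.indicator_apply]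
    rw [this]
    exact (integrable_const 1).indicator hA
  have hIB : Integrable (fun p : Ω × ℝ => if F1 (Y2 p.1) ≤ p.2 then (1:ℝ) else 0) (P.prod ν) := by
    have : (fun p : Ω × ℝ => if F1 (Y2 p.1) ≤ p.2 then (1:ℝ) else 0)
        = ({p : Ω × ℝ | F1 (Y2 p.1) ≤ p.2}).indicator (fun _ => (1:ℝ)) := by
      funext p; simp [Set.indicator_apply]
    rw [this]
    exact (integrable_const 1).indicator hB
  have hIAB : Integrable
      (fun p : Ω × ℝ => if F1 (Y1 p.1) ≤ p.2 ∧ F1 (Y2 p.1) ≤ p.2 then (1:ℝ) else 0)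
      (P.prod ν) := by
    have : (fun p : Ω × ℝ => if F1 (Y1 p.1) ≤ p.2 ∧ F1 (Y2 p.1) ≤ p.2 then (1:ℝ) else 0)
        = ({p : Ω × ℝ | F1 (Y1 p.1) ≤ p.2} ∩ {p : Ω × ℝ | F1 (Y2 p.1) ≤ p.2}).indicator
            (fun _ => (1:ℝ)) := by
      funext p; simp [Set.indicator_apply, Set.mem_inter_iff]
    rw [this]
    exact (integrable_const 1).indicator (hA.inter hB)
  have hint : Integrable (uncurry f) (P.prod ν) := by
    have huf : uncurry f = fun p : Ω × ℝ =>
        (if F1 (Y1 p.1) ≤ p.2 then (1:ℝ) else 0) + (if F1 (Y2 p.1) ≤ p.2 then (1:ℝ) else 0)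
          - 2 * (if F1 (Y1 p.1) ≤ p.2 ∧ F1 (Y2 p.1) ≤ p.2 then (1:ℝ) else 0) := by
      funext p; rfl
    rw [huf]
    exact (hIA.add hIB).sub (hIAB.const_mul 2)
  -- step 1: rewrite the integrand
  have step1 : ∀ ω, |F1 (Y2 ω) - F1 (Y1 ω)| = ∫ x in Ioc (0:ℝ) 1, f ω x := by
    intro ω
    set a := F1 (Y1 ω)
    set b := F1 (Y2 ω)
    have hmaxite : ∀ x : ℝ, (if a ≤ x ∧ b ≤ x then (1:ℝ) else 0)
        = (if max a b ≤ x then (1:ℝ) else 0) := by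
      intro x; simp [max_le_iff]
    have hfx : (fun x => f ω x) = fun x =>
        (if a ≤ x then (1:ℝ) else 0) + (if b ≤ x then (1:ℝ) else 0)
          - 2 * (if max a b ≤ x then (1:ℝ) else 0) := by
      funext x; rw [hf]; simp only; rw [hmaxite x]
    rw [hfx]
    have I3 : Integrable (fun x => 2 * (if max a b ≤ x then (1:ℝ) else 0)) ν :=
      (aux_ind_integrable (max a b)).const_mul 2
    have I12 : Integrable
        (fun x => (if a ≤ x then (1:ℝ) else 0) + (if b ≤ x then (1:ℝ) else 0)) ν :=
      (aux_ind_integrable a).add (aux_ind_integrable b)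
    rw [integral_sub I12 I3,
      integral_add (aux_ind_integrable a) (aux_ind_integrable b),
      integral_const_mul]
    have ha' := hbd (Y1 ω); have hb' := hbd (Y2 ω)
    rw [aux_ind_int a ha'.1 ha'.2, aux_ind_int b hb'.1 hb'.2,
      aux_ind_int (max a b) (le_max_of_le_left ha'.1) (max_le ha'.2 hb'.2)]
    have h1 : max a b + min a b = a + b := max_add_min a b
    have h2 : max a b - min a b = |b - a| := max_sub_min_eq_abs a b
    linarith
  -- step 2: Fubini
  have step2 : ∫ ω, (∫ x in Ioc (0:ℝ) 1, f ω x) ∂P = ∫ x in Ioc (0:ℝ) 1, (∫ ω, f ω x ∂P) := by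
    exact integral_integral_swap hint
  -- pointwise value of the inner integral for x ∈ Ioo 0 1
  have hpoint : ∀ x ∈ Ioo (0:ℝ) 1, (∫ ω, f ω x ∂P) = 2 * x - 2 * C x x := by
    intro x hx
    obtain ⟨s, hs⟩ := hsurj x hx
    have hsetA : {ω | F1 (Y1 ω) ≤ x} = {ω | Y1 ω ≤ s} := by
      ext ω; simp only [mem_setOf_eq, ← hs, hmono.le_iff_le]
    have hsetB : {ω | F1 (Y2 ω) ≤ x} = {ω | Y2 ω ≤ s} := by
      ext ω; simp only [mem_setOf_eq, ← hs, hmono.le_iff_le]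
    have hsetAB : {ω | F1 (Y1 ω) ≤ x ∧ F1 (Y2 ω) ≤ x} = {ω | Y1 ω ≤ s ∧ Y2 ω ≤ s} := by
      ext ω; simp only [mem_setOf_eq, ← hs, hmono.le_iff_le]
    have hmA : MeasurableSet {ω | F1 (Y1 ω) ≤ x} := ha_m measurableSet_Iic
    have hmB : MeasurableSet {ω | F1 (Y2 ω) ≤ x} := hb_m measurableSet_Iic
    have hmAB : MeasurableSet {ω | F1 (Y1 ω) ≤ x ∧ F1 (Y2 ω) ≤ x} := hmA.inter hmB
    have hIa : Integrable (fun ω => if F1 (Y1 ω) ≤ x then (1:ℝ) else 0) P := by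
      have : (fun ω => if F1 (Y1 ω) ≤ x then (1:ℝ) else 0)
          = ({ω | F1 (Y1 ω) ≤ x}).indicator (fun _ => (1:ℝ)) := by
        funext ω; simp [Set.indicator_apply]
      rw [this]; exact (integrable_const 1).indicator hmA
    have hIb : Integrable (fun ω => if F1 (Y2 ω) ≤ x then (1:ℝ) else 0) P := by
      have : (fun ω => if F1 (Y2 ω) ≤ x then (1:ℝ) else 0)
          = ({ω | F1 (Y2 ω) ≤ x}).indicator (fun _ => (1:ℝ)) := by
        funext ω; simp [Set.indicator_apply]
      rw [this]; exact (integrable_const 1).indicator hmB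
    have hIab : Integrable (fun ω => if F1 (Y1 ω) ≤ x ∧ F1 (Y2 ω) ≤ x then (1:ℝ) else 0) P := by
      have : (fun ω => if F1 (Y1 ω) ≤ x ∧ F1 (Y2 ω) ≤ x then (1:ℝ) else 0)
          = ({ω | F1 (Y1 ω) ≤ x ∧ F1 (Y2 ω) ≤ x}).indicator (fun _ => (1:ℝ)) := by
        funext ω; simp [Set.indicator_apply]
      rw [this]; exact (integrable_const 1).indicator hmAB
    have e_a : ∫ ω, (if F1 (Y1 ω) ≤ x then (1:ℝ) else 0) ∂P
        = (P {ω | F1 (Y1 ω) ≤ x}).toReal := by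
      have h1 : (fun ω => if F1 (Y1 ω) ≤ x then (1:ℝ) else 0)
          = ({ω | F1 (Y1 ω) ≤ x}).indicator (fun _ => (1:ℝ)) := by
        funext ω; simp [Set.indicator_apply]
      rw [h1, aux_int_ind P _ hmA]
    have e_b : ∫ ω, (if F1 (Y2 ω) ≤ x then (1:ℝ) else 0) ∂P
        = (P {ω | F1 (Y2 ω) ≤ x}).toReal := by
      have h1 : (fun ω => if F1 (Y2 ω) ≤ x then (1:ℝ) else 0)
          = ({ω | F1 (Y2 ω) ≤ x}).indicator (fun _ => (1:ℝ)) := by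
        funext ω; simp [Set.indicator_apply]
      rw [h1, aux_int_ind P _ hmB]
    have e_ab : ∫ ω, (if F1 (Y1 ω) ≤ x ∧ F1 (Y2 ω) ≤ x then (1:ℝ) else 0) ∂P
        = (P {ω | F1 (Y1 ω) ≤ x ∧ F1 (Y2 ω) ≤ x}).toReal := by
      have h1 : (fun ω => if F1 (Y1 ω) ≤ x ∧ F1 (Y2 ω) ≤ x then (1:ℝ) else 0)
          = ({ω | F1 (Y1 ω) ≤ x ∧ F1 (Y2 ω) ≤ x}).indicator (fun _ => (1:ℝ)) := by
        funext ω; simp [Set.indicator_apply]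
      rw [h1, aux_int_ind P _ hmAB]
    have hval : (∫ ω, f ω x ∂P)
        = (P {ω | F1 (Y1 ω) ≤ x}).toReal + (P {ω | F1 (Y2 ω) ≤ x}).toReal
          - 2 * (P {ω | F1 (Y1 ω) ≤ x ∧ F1 (Y2 ω) ≤ x}).toReal := by
      rw [hf]
      simp only
      have I12 : Integrable (fun ω => (if F1 (Y1 ω) ≤ x then (1:ℝ) else 0)
          + (if F1 (Y2 ω) ≤ x then (1:ℝ) else 0)) P := hIa.add hIb
      have I3 : Integrable
          (fun ω => 2 * (if F1 (Y1 ω) ≤ x ∧ F1 (Y2 ω) ≤ x then (1:ℝ) else 0)) P :=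
        hIab.const_mul 2
      rw [integral_sub I12 I3, integral_add hIa hIb,
        integral_const_mul, e_a, e_b, e_ab]
    rw [hval, hsetA, hsetB, hsetAB]
    rw [← hF1 s, hid s, hSklar s s, hs]
    ring
  -- integrability of the inner-integral function on ν
  have hH : Integrable (fun x => ∫ ω, f ω x ∂P) ν := hint.integral_prod_right
  have hae : ∀ᵐ x ∂ν, (∫ ω, f ω x ∂P) = 2 * x - 2 * C x x := by
    have h1 : ∀ᵐ x ∂(volume : Measure ℝ), x ≠ (1:ℝ) := by
      rw [ae_iff]
      have : {x : ℝ | ¬ x ≠ 1} = {1} := by ext y; simp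
      rw [this]
      exact Real.volume_singleton
    rw [hν]
    rw [ae_restrict_iff' measurableSet_Ioc]
    filter_upwards [h1] with x hx1 hxm
    exact hpoint x ⟨hxm.1, lt_of_le_of_ne hxm.2 hx1⟩
  have hRHSint : Integrable (fun x => 2 * x - 2 * C x x) ν := hH.congr hae
  have h2x_int : Integrable (fun x : ℝ => 2 * x) ν :=
    (continuous_const.mul continuous_id).integrableOn_Ioc
  have hC_int : Integrable (fun x => 2 * C x x) ν := by
    have : (fun x => 2 * C x x) = fun x => (2 * x) - (2 * x - 2 * C x x) := by
      funext x; ring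
    rw [this]
    exact h2x_int.sub hRHSint
  -- put everything together
  calc ∫ ω, |F1 (Y2 ω) - F1 (Y1 ω)| ∂P
      = ∫ ω, (∫ x in Ioc (0:ℝ) 1, f ω x) ∂P := by
        exact integral_congr_ae (Filter.Eventually.of_forall step1)
    _ = ∫ x in Ioc (0:ℝ) 1, (∫ ω, f ω x ∂P) := step2
    _ = ∫ x in Ioc (0:ℝ) 1, (2 * x - 2 * C x x) := integral_congr_ae hae
    _ = (∫ x in Ioc (0:ℝ) 1, 2 * x) - ∫ x in Ioc (0:ℝ) 1, 2 * C x x :=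
        integral_sub h2x_int hC_int
    _ = 1 - 2 * ∫ x in (0:ℝ)..1, C x x := by
        have e1 : (∫ x in Ioc (0:ℝ) 1, 2 * x) = ∫ x in (0:ℝ)..1, 2 * x :=
          (intervalIntegral.integral_of_le zero_le_one).symm
        have e2 : (∫ x in Ioc (0:ℝ) 1, 2 * C x x) = ∫ x in (0:ℝ)..1, 2 * C x x :=
          (intervalIntegral.integral_of_le zero_le_one).symm
        rw [e1, e2]
        have : (∫ x in (0:ℝ)..1, 2 * x) = 1 := by
          rw [intervalIntegral.integral_const_mul, integral_id]
          norm_num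
        rw [this, intervalIntegral.integral_const_mul]
end

section
/- Let Y1 have continuous c.d.f. F1 symmetric about μ ∈ ℝ in the sense that F1(x) = 1 - F1(μ - x) for all x, and let Y2 = μ - Y1 (so Y1 + Y2 = μ a.s.). Then Y2 has the same distribution as Y1 and the Gini distance G(Y1,Y2) = E|F1(Y1) - F1(Y2)| attains the maximal value 1/2. -/
open MeasureTheory Set

open Filter intervalIntegral in

theorem aux_noatom {Ω : Type*} [MeasurableSpace Ω] (P : Measure Ω) [IsProbabilityMeasure P]
    (Y1 : Ω → ℝ) (hY1 : Measurable Y1) (F1 : ℝ → ℝ)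
    (hF1 : ∀ x, F1 x = (P {ω | Y1 ω ≤ x}).toReal)
    (hF1c : Continuous F1) (t : ℝ) : P {ω | Y1 ω = t} = 0 := by
  have hmeas : ∀ x : ℝ, MeasurableSet {ω | Y1 ω ≤ x} := fun x => hY1 measurableSet_Iic
  have key : ∀ ε > (0:ℝ), (P {ω | Y1 ω = t}).toReal ≤ 0 + ε := by
    intro ε hε
    obtain ⟨δ, hδ, hδ'⟩ := Metric.continuous_iff.1 hF1c t ε hε
    have hst : t - δ/2 < t := by linarith
    have hdist : dist (t - δ/2) t < δ := by
      rw [Real.dist_eq, abs_of_nonpos (by linarith)]; linarith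
    have hFd : F1 t - F1 (t - δ/2) < ε := by
      have h2 := abs_lt.1 ((Real.dist_eq _ _) ▸ hδ' _ hdist)
      linarith [h2.1, h2.2]
    have hsub : {ω | Y1 ω = t} ⊆ {ω | Y1 ω ≤ t} \ {ω | Y1 ω ≤ t - δ/2} := by
      intro ω hω
      simp only [mem_setOf_eq, mem_diff] at *
      exact ⟨hω.le, fun h => by linarith [hω ▸ h]⟩
    have hss : {ω | Y1 ω ≤ t - δ/2} ⊆ {ω | Y1 ω ≤ t} := fun ω h => le_trans h hst.le
    calc (P {ω | Y1 ω = t}).toReal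
        ≤ (P ({ω | Y1 ω ≤ t} \ {ω | Y1 ω ≤ t - δ/2})).toReal :=
          ENNReal.toReal_mono (measure_ne_top _ _) (measure_mono hsub)
      _ = (P {ω | Y1 ω ≤ t}).toReal - (P {ω | Y1 ω ≤ t - δ/2}).toReal := by
          rw [measure_diff hss ((hmeas _).nullMeasurableSet) (measure_ne_top _ _),
            ENNReal.toReal_sub_of_le (measure_mono hss) (measure_ne_top _ _)]
      _ = F1 t - F1 (t - δ/2) := by rw [hF1, hF1]
      _ ≤ 0 + ε := by linarith
  have h0 : (P {ω | Y1 ω = t}).toReal = 0 :=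
    le_antisymm (by simpa using le_of_forall_pos_le_add (fun ε hε => key ε hε))
      ENNReal.toReal_nonneg
  exact ((ENNReal.toReal_eq_zero_iff _).1 h0).resolve_right (measure_ne_top _ _)

theorem aux_part1 {Ω : Type*} [MeasurableSpace Ω] (P : Measure Ω) [IsProbabilityMeasure P]
    (Y1 : Ω → ℝ) (hY1 : Measurable Y1) (μ : ℝ) (F1 : ℝ → ℝ)
    (hF1 : ∀ x, F1 x = (P {ω | Y1 ω ≤ x}).toReal)
    (hF1c : Continuous F1)
    (hsymm : ∀ x, F1 x = 1 - F1 (μ - x)) (x : ℝ) :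
    (P {ω | μ - Y1 ω ≤ x}).toReal = F1 x := by
  have hset : {ω | μ - Y1 ω ≤ x} = {ω | Y1 ω < μ - x}ᶜ := by
    ext ω; simp only [mem_setOf_eq, mem_compl_iff, not_lt]; constructor <;> intro h <;> linarith
  have hlt : P {ω | Y1 ω < μ - x} = P {ω | Y1 ω ≤ μ - x} := by
    have : {ω | Y1 ω < μ - x} = {ω | Y1 ω ≤ μ - x} \ {ω | Y1 ω = μ - x} := by
      ext ω; simp only [mem_setOf_eq, mem_diff]
      constructor
      · exact fun h => ⟨h.le, h.ne⟩
      · exact fun ⟨h1, h2⟩ => lt_of_le_of_ne h1 h2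
    rw [this, measure_diff_null (aux_noatom P Y1 hY1 F1 hF1 hF1c _)]
  have hcompl : P {ω | Y1 ω < μ - x}ᶜ = 1 - P {ω | Y1 ω ≤ μ - x} := by
    rw [measure_compl (by exact measurableSet_lt (hY1.comp measurable_id) measurable_const)
      (measure_ne_top _ _), measure_univ, hlt]
  rw [hset, hcompl, ENNReal.toReal_sub_of_le prob_le_one ENNReal.one_ne_top,
    ENNReal.toReal_one, ← hF1, ← hsymm]

open Filter intervalIntegral in

theorem aux_map {Ω : Type*} [MeasurableSpace Ω] (P : Measure Ω) [IsProbabilityMeasure P]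
    (Y1 : Ω → ℝ) (hY1 : Measurable Y1) (F1 : ℝ → ℝ)
    (hF1 : ∀ x, F1 x = (P {ω | Y1 ω ≤ x}).toReal)
    (hF1c : Continuous F1) (hmono : StrictMono F1) :
    P.map (fun ω => F1 (Y1 ω)) = volume.restrict (Icc 0 1) := by
  have hmeasset : ∀ x : ℝ, MeasurableSet {ω | Y1 ω ≤ x} := fun x => hY1 measurableSet_Iic
  have hFm : Measurable fun ω => F1 (Y1 ω) := hF1c.measurable.comp hY1
  have hF0 : ∀ x, 0 ≤ F1 x := fun x => (hF1 x) ▸ ENNReal.toReal_nonneg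
  have hF1le : ∀ x, F1 x ≤ 1 := fun x => (hF1 x) ▸
    (ENNReal.toReal_le_of_le_ofReal one_pos.le (by simpa using prob_le_one))
  have hFpos : ∀ x, 0 < F1 x := by
    intro x
    rcases lt_or_eq_of_le (hF0 x) with h | h
    · exact h
    · exact absurd (hF0 (x - 1)) (by nlinarith [hmono (show x - 1 < x by linarith), h])
  have hFlt1 : ∀ x, F1 x < 1 := by
    intro x
    rcases lt_or_eq_of_le (hF1le x) with h | h
    · exact h
    · exact absurd (hF1le (x + 1)) (by nlinarith [hmono (show x < x + 1 by linarith)])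
  -- limits along ℕ
  have hsup : ∀ u : ℝ, u < 1 → ∃ b : ℝ, u < F1 b := by
    intro u hu
    have hmonoset : Monotone fun n : ℕ => {ω | Y1 ω ≤ (n:ℝ)} := by
      intro n m hnm ω h
      simp only [mem_setOf_eq] at h ⊢
      exact le_trans h (by exact_mod_cast hnm)
    have hunion : (⋃ n : ℕ, {ω | Y1 ω ≤ (n:ℝ)}) = univ := by
      ext ω; simp only [mem_iUnion, mem_setOf_eq, mem_univ, iff_true]
      obtain ⟨n, hn⟩ := exists_nat_ge (Y1 ω)
      exact ⟨n, hn⟩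
    have ht := tendsto_measure_iUnion_atTop (μ := P) hmonoset
    rw [hunion, measure_univ] at ht
    have ht2 : Tendsto (fun n : ℕ => F1 (n : ℝ)) atTop (nhds 1) := by
      have := (ENNReal.tendsto_toReal ENNReal.one_ne_top).comp ht
      simpa [Function.comp_def, hF1] using this
    obtain ⟨n, hn⟩ := (ht2.eventually (eventually_gt_nhds hu)).exists
    exact ⟨n, hn⟩
  have hinf : ∀ u : ℝ, 0 < u → ∃ a : ℝ, F1 a < u := by
    intro u hu
    have hanti : Antitone fun n : ℕ => {ω | Y1 ω ≤ -(n:ℝ)} := by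
      intro n m hnm ω h
      simp only [mem_setOf_eq] at h ⊢
      exact le_trans h (neg_le_neg (by exact_mod_cast hnm))
    have hinter : (⋂ n : ℕ, {ω | Y1 ω ≤ -(n:ℝ)}) = ∅ := by
      ext ω; simp only [mem_iInter, mem_setOf_eq, mem_empty_iff_false, iff_false, not_forall]
      obtain ⟨n, hn⟩ := exists_nat_gt (-Y1 ω)
      exact ⟨n, by push_neg; linarith⟩
    have ht := tendsto_measure_iInter_atTop (μ := P)
      (fun n => (hmeasset _).nullMeasurableSet) hanti ⟨0, measure_ne_top _ _⟩
    rw [hinter, measure_empty] at ht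
    have ht2 : Tendsto (fun n : ℕ => F1 (-(n:ℝ))) atTop (nhds 0) := by
      have := (ENNReal.tendsto_toReal ENNReal.zero_ne_top).comp ht
      simpa [Function.comp_def, hF1] using this
    obtain ⟨n, hn⟩ := (ht2.eventually (eventually_lt_nhds hu)).exists
    exact ⟨-(n:ℝ), hn⟩
  refine Measure.ext_of_Iic _ _ (fun u => ?_)
  rw [Measure.map_apply hFm measurableSet_Iic,
    Measure.restrict_apply measurableSet_Iic]
  have hpre : (fun ω => F1 (Y1 ω)) ⁻¹' Iic u = {ω | F1 (Y1 ω) ≤ u} := rfl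
  rcases le_or_gt u 0 with hu0 | hu0
  · have h1 : (fun ω => F1 (Y1 ω)) ⁻¹' Iic u = ∅ := by
      ext ω; simp only [mem_preimage, mem_Iic, mem_empty_iff_false, iff_false, not_le]
      exact lt_of_le_of_lt hu0 (hFpos _)
    have h2 : Iic u ∩ Icc (0:ℝ) 1 = ∅ ∨ Iic u ∩ Icc (0:ℝ) 1 = {0} := by
      rcases eq_or_lt_of_le hu0 with h | h
      · right; ext x; simp only [mem_inter_iff, mem_Iic, mem_Icc, mem_singleton_iff]
        constructor
        · rintro ⟨h1, h2, h3⟩; linarith [h ▸ h1]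
        · rintro rfl; exact ⟨by linarith, le_refl _, by norm_num⟩
      · left; ext x; simp only [mem_inter_iff, mem_Iic, mem_Icc, mem_empty_iff_false, iff_false]
        rintro ⟨h1, h2, h3⟩; linarith
    rw [h1, measure_empty]
    rcases h2 with h | h <;> simp [h]
  rcases lt_or_ge u 1 with hu1 | hu1
  · obtain ⟨a, ha⟩ := hinf u hu0
    obtain ⟨b, hb⟩ := hsup u hu1
    have hab : a ≤ b := by
      by_contra h
      push_neg at h
      exact absurd (hmono h) (by linarith)
    obtain ⟨x, _, hx⟩ := intermediate_value_Icc hab hF1c.continuousOn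
      (show u ∈ Icc (F1 a) (F1 b) from ⟨ha.le, hb.le⟩)
    have h1 : (fun ω => F1 (Y1 ω)) ⁻¹' Iic u = {ω | Y1 ω ≤ x} := by
      ext ω; simp only [mem_preimage, mem_Iic, mem_setOf_eq, ← hx]
      exact ⟨fun h => (hmono.le_iff_le).1 h, fun h => hmono.monotone h⟩
    have h2 : Iic u ∩ Icc (0:ℝ) 1 = Icc 0 u := by
      ext y; simp only [mem_inter_iff, mem_Iic, mem_Icc]
      constructor
      · rintro ⟨h1, h2, h3⟩; exact ⟨h2, h1⟩
      · rintro ⟨h1, h2⟩; exact ⟨h2, h1, by linarith⟩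
    rw [h1, h2, Real.volume_Icc, ← hx, ← ENNReal.ofReal_toReal (measure_ne_top P _), hF1]
    norm_num
  · have h1 : (fun ω => F1 (Y1 ω)) ⁻¹' Iic u = univ := by
      ext ω; simp only [mem_preimage, mem_Iic, mem_univ, iff_true]
      exact le_trans (hFlt1 _).le hu1
    have h2 : Iic u ∩ Icc (0:ℝ) 1 = Icc 0 1 := by
      ext y; simp only [mem_inter_iff, mem_Iic, mem_Icc]
      exact ⟨fun ⟨h1, h2⟩ => h2, fun ⟨h1, h2⟩ => ⟨by linarith, h1, h2⟩⟩
    rw [h1, h2, measure_univ, Real.volume_Icc]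
    norm_num

open Filter intervalIntegral in

theorem aux_int : ∫ x in Icc (0:ℝ) 1, |2*x - 1| = 1/2 := by
  rw [integral_Icc_eq_integral_Ioc, ← intervalIntegral.integral_of_le (by norm_num : (0:ℝ) ≤ 1)]
  have hc : Continuous fun x : ℝ => |2*x - 1| := ((continuous_const.mul continuous_id).sub continuous_const).abs
  have i1 : IntervalIntegrable (fun x : ℝ => |2*x-1|) volume 0 (1/2) := hc.intervalIntegrable _ _
  have i2 : IntervalIntegrable (fun x : ℝ => |2*x-1|) volume (1/2) 1 := hc.intervalIntegrable _ _
  rw [← intervalIntegral.integral_add_adjacent_intervals i1 i2]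
  have e1 : ∫ x in (0:ℝ)..(1/2), |2*x-1| = ∫ x in (0:ℝ)..(1/2), (1 - 2*x) := by
    apply intervalIntegral.integral_congr
    intro x hx
    simp only [uIcc_of_le (by norm_num : (0:ℝ) ≤ 1/2), mem_Icc] at hx
    show |2*x-1| = 1 - 2*x
    rw [abs_of_nonpos (by linarith [hx.1, hx.2])]
    ring
  have e2 : ∫ x in (1/2:ℝ)..1, |2*x-1| = ∫ x in (1/2:ℝ)..1, (2*x - 1) := by
    apply intervalIntegral.integral_congr
    intro x hx
    simp only [uIcc_of_le (by norm_num : (1/2:ℝ) ≤ 1), mem_Icc] at hx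
    show |2*x-1| = 2*x - 1
    rw [abs_of_nonneg (by linarith [hx.1, hx.2])]
  have hint : IntervalIntegrable (fun x : ℝ => 2*x) volume 0 (1/2) :=
    (continuous_const.mul continuous_id).intervalIntegrable _ _
  have hint2 : IntervalIntegrable (fun x : ℝ => 2*x) volume (1/2) 1 :=
    (continuous_const.mul continuous_id).intervalIntegrable _ _
  rw [e1, e2,
    intervalIntegral.integral_sub intervalIntegrable_const hint,
    intervalIntegral.integral_sub hint2 intervalIntegrable_const]
  have hid : ∀ a b : ℝ, ∫ x in a..b, x = (b^2 - a^2)/2 := fun a b => integral_id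
  rw [intervalIntegral.integral_const_mul, intervalIntegral.integral_const_mul, hid, hid]
  norm_num

theorem stmt13 {Ω : Type*} [MeasurableSpace Ω] (P : Measure Ω) [IsProbabilityMeasure P]
    (Y1 : Ω → ℝ) (hY1 : Measurable Y1) (μ : ℝ)
    (F1 : ℝ → ℝ)
    (hF1 : ∀ x, F1 x = (P {ω | Y1 ω ≤ x}).toReal)
    (hF1c : Continuous F1) (hmono : StrictMono F1)
    (hsymm : ∀ x, F1 x = 1 - F1 (μ - x)) :
    (∀ x, (P {ω | μ - Y1 ω ≤ x}).toReal = F1 x) ∧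
    ∫ ω, |F1 (Y1 ω) - F1 (μ - Y1 ω)| ∂P = 1/2 := by
  constructor
  · exact fun x => aux_part1 P Y1 hY1 μ F1 hF1 hF1c hsymm x
  · have heq : (fun ω => |F1 (Y1 ω) - F1 (μ - Y1 ω)|) = fun ω => |2 * F1 (Y1 ω) - 1| := by
      funext ω
      have h := hsymm (Y1 ω)
      have h2 : F1 (μ - Y1 ω) = 1 - F1 (Y1 ω) := by linarith
      rw [h2]
      congr 1
      ring
    rw [heq]
    have hFm : Measurable fun ω => F1 (Y1 ω) := hF1c.measurable.comp hY1
    have hg : Continuous fun x : ℝ => |2*x - 1| :=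
      ((continuous_const.mul continuous_id).sub continuous_const).abs
    have key : ∫ x, |2*x - 1| ∂(P.map (fun ω => F1 (Y1 ω))) = ∫ ω, |2 * F1 (Y1 ω) - 1| ∂P :=
      integral_map hFm.aemeasurable hg.aestronglyMeasurable
    rw [← key, aux_map P Y1 hY1 F1 hF1 hF1c hmono]
    exact aux_int
end

section
/- Let Y1 be a random variable with values in [0,1] with c.d.f. F_{Y1}, let Y be an independent copy of Y1, and let Y2 ~ U(0,1). Then the squared 2-Wasserstein distance between the laws of Y1 and Y2 equals 1/3 + E[Y1²] - E[Y1 ∨ Y], where Y1 ∨ Y = max(Y1, Y). -/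
open MeasureTheory Set ProbabilityTheory Filter Topology

namespace Stmt14Aux

variable (μ : Measure ℝ) [IsProbabilityMeasure μ]

/-- Monotone "quantile" function, globally defined. -/
noncomputable def qc (x : ℝ) : ℝ :=
  sInf ({y | min x 1 ≤ cdf μ y} ∩ Icc 0 1)

variable {μ} (hμ : μ (Icc (0:ℝ) 1)ᶜ = 0)
include hμ

lemma cdf_one' : cdf μ 1 = 1 := by
  rw [cdf_eq_real, measureReal_def]
  have h1 : μ (Iic (1:ℝ)) = 1 := by
    rw [← prob_compl_eq_zero_iff₀ nullMeasurableSet_Iic]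
    refine measure_mono_null ?_ hμ
    intro x hx
    simp only [compl_Iic, mem_Ioi] at hx
    simp only [mem_compl_iff, mem_Icc, not_and, not_le]
    intro _; exact hx
  rw [h1]; simp

lemma cdf_neg' {y : ℝ} (hy : y < 0) : cdf μ y = 0 := by
  rw [cdf_eq_real, measureReal_def]
  have : μ (Iic y) = 0 := by
    refine measure_mono_null ?_ hμ
    intro x hx
    simp only [mem_Iic] at hx
    simp only [mem_compl_iff, mem_Icc, not_and, not_le]
    intro h0; linarith
  rw [this]; simp

end Stmt14Aux

namespace Stmt14Aux

open ProbabilityTheory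

set_option linter.unusedSectionVars false

variable {μ : Measure ℝ} [IsProbabilityMeasure μ] (hμ : μ (Icc (0:ℝ) 1)ᶜ = 0)
include hμ

lemma qc_T_nonempty (x : ℝ) : ({y | min x 1 ≤ cdf μ y} ∩ Icc 0 1).Nonempty := by
  refine ⟨1, ?_, by norm_num⟩
  simp only [mem_setOf_eq, cdf_one' hμ]
  exact min_le_right x 1

lemma qc_T_bdd (x : ℝ) : BddBelow ({y | min x 1 ≤ cdf μ y} ∩ Icc (0:ℝ) 1) :=
  (bddBelow_Icc : BddBelow (Icc (0:ℝ) 1)).mono inter_subset_right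

lemma qc_mono : Monotone (qc μ) := by
  intro x1 x2 h
  refine csInf_le_csInf (qc_T_bdd hμ x1) (qc_T_nonempty hμ x2) ?_
  intro y hy
  exact ⟨le_trans (min_le_min (le_refl _) le_rfl |>.trans (min_le_min h le_rfl)) hy.1, hy.2⟩

lemma qc_mem (x : ℝ) : qc μ x ∈ Icc (0:ℝ) 1 := by
  constructor
  · exact le_csInf (qc_T_nonempty hμ x) fun y hy => hy.2.1
  · refine csInf_le (qc_T_bdd hμ x) ⟨?_, by norm_num⟩
    simp only [mem_setOf_eq, cdf_one' hμ]
    exact min_le_right x 1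

lemma S_bdd {x : ℝ} (hx : x ∈ Ioo (0:ℝ) 1) : BddBelow {y | x ≤ cdf μ y} := by
  refine ⟨0, fun y hy => ?_⟩
  by_contra hlt
  push_neg at hlt
  have := cdf_neg' hμ hlt
  simp only [mem_setOf_eq, this] at hy
  linarith [hx.1]

lemma S_nonempty {x : ℝ} (hx : x ∈ Ioo (0:ℝ) 1) : Set.Nonempty {y | x ≤ cdf μ y} :=
  ⟨1, by simp only [mem_setOf_eq, cdf_one' hμ]; exact hx.2.le⟩

lemma qc_eq {x : ℝ} (hx : x ∈ Ioo (0:ℝ) 1) : qc μ x = sInf {y | x ≤ cdf μ y} := by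
  have hmin : min x 1 = x := min_eq_left hx.2.le
  unfold qc
  rw [hmin]
  refine le_antisymm ?_ ?_
  · refine le_csInf (S_nonempty hμ hx) fun y hy => ?_
    have h0 : (0:ℝ) ≤ y := by
      by_contra hlt
      push_neg at hlt
      have := cdf_neg' hμ hlt
      simp only [mem_setOf_eq, this] at hy
      linarith [hx.1]
    have hbdd : BddBelow ({y | x ≤ cdf μ y} ∩ Icc (0:ℝ) 1) :=
      (bddBelow_Icc : BddBelow (Icc (0:ℝ) 1)).mono inter_subset_right
    rcases le_or_gt y 1 with h1 | h1
    · exact csInf_le hbdd ⟨hy, h0, h1⟩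
    · exact le_trans (csInf_le hbdd ⟨by simp [cdf_one' hμ, hx.2.le], by norm_num⟩) h1.le
  · exact csInf_le_csInf (S_bdd hμ hx) ⟨1, by simp [cdf_one' hμ, hx.2.le]⟩ inter_subset_left

end Stmt14Aux

namespace Stmt14Aux

open ProbabilityTheory Filter Topology

set_option linter.unusedSectionVars false

variable {μ : Measure ℝ} [IsProbabilityMeasure μ] (hμ : μ (Icc (0:ℝ) 1)ᶜ = 0)
include hμ

lemma le_cdf_qc {x : ℝ} (hx : x ∈ Ioo (0:ℝ) 1) : x ≤ cdf μ (qc μ x) := by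
  rw [qc_eq hμ hx]
  set S := {y | x ≤ cdf μ y} with hS
  set a := sInf S with ha
  obtain ⟨u, hu_anti, hu_tend, hu_mem⟩ := exists_seq_tendsto_sInf (S_nonempty hμ hx) (S_bdd hμ hx)
  have hcont : ContinuousWithinAt (cdf μ) (Ici a) a := (cdf μ).right_continuous a
  have htend : Tendsto (fun n => cdf μ (u n)) atTop (𝓝 (cdf μ a)) := by
    refine hcont.tendsto.comp ?_
    refine tendsto_nhdsWithin_of_tendsto_nhds_of_eventually_within _ hu_tend ?_
    exact Eventually.of_forall fun n => csInf_le (S_bdd hμ hx) (hu_mem n)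
  exact ge_of_tendsto htend (Eventually.of_forall fun n => hu_mem n)

lemma qc_le_iff {x : ℝ} (hx : x ∈ Ioo (0:ℝ) 1) (y : ℝ) :
    qc μ x ≤ y ↔ x ≤ cdf μ y := by
  constructor
  · intro h
    exact le_trans (le_cdf_qc hμ hx) ((cdf μ).mono h)
  · intro h
    rw [qc_eq hμ hx]
    exact csInf_le (S_bdd hμ hx) h

lemma map_qc : (volume.restrict (Ioo (0:ℝ) 1)).map (qc μ) = μ := by
  have hmeas : Measurable (qc μ) := (qc_mono hμ).measurable
  have hprob : IsProbabilityMeasure (volume.restrict (Ioo (0:ℝ) 1)) :=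
    ⟨by simp⟩
  have : IsProbabilityMeasure ((volume.restrict (Ioo (0:ℝ) 1)).map (qc μ)) :=
    Measure.isProbabilityMeasure_map hmeas.aemeasurable
  refine Measure.ext_of_Iic _ _ fun a => ?_
  rw [Measure.map_apply hmeas measurableSet_Iic, Measure.restrict_apply' measurableSet_Ioo]
  set c := cdf μ a with hc
  have hc0 : 0 ≤ c := cdf_nonneg μ a
  have hc1 : c ≤ 1 := cdf_le_one μ a
  have hsub1 : Ioo (0:ℝ) c ⊆ qc μ ⁻¹' Iic a ∩ Ioo 0 1 := by
    intro x hx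
    have hx01 : x ∈ Ioo (0:ℝ) 1 := ⟨hx.1, lt_of_lt_of_le hx.2 hc1⟩
    exact ⟨(qc_le_iff hμ hx01 a).mpr hx.2.le, hx01⟩
  have hsub2 : qc μ ⁻¹' Iic a ∩ Ioo 0 1 ⊆ Ioc (0:ℝ) c := by
    intro x hx
    exact ⟨hx.2.1, (qc_le_iff hμ hx.2 a).mp hx.1⟩
  have h1 : volume (Ioo (0:ℝ) c) = ENNReal.ofReal c := by simp
  have h2 : volume (Ioc (0:ℝ) c) = ENNReal.ofReal c := by simp
  have : volume (qc μ ⁻¹' Iic a ∩ Ioo 0 1) = ENNReal.ofReal c :=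
    le_antisymm (h2 ▸ measure_mono hsub2) (h1 ▸ measure_mono hsub1)
  rw [this, hc, ofReal_cdf]

end Stmt14Aux

namespace Stmt14Aux

open ProbabilityTheory

set_option linter.unusedSectionVars false

lemma integrable_of_bdd {α : Type*} [MeasurableSpace α] {ν : Measure α} [IsFiniteMeasure ν]
    {f : α → ℝ} (hf : AEStronglyMeasurable f ν) {C : ℝ} (h : ∀ᵐ x ∂ν, |f x| ≤ C) :
    Integrable f ν :=
  Integrable.mono' (integrable_const C) hf (by simpa using h)

variable {μ : Measure ℝ} [IsProbabilityMeasure μ] (hμ : μ (Icc (0:ℝ) 1)ᶜ = 0)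
include hμ

lemma second_moment : ∫ x in Ioo (0:ℝ) 1, (qc μ x)^2 = ∫ y, y^2 ∂μ := by
  have h := integral_map (μ := volume.restrict (Ioo (0:ℝ) 1)) (φ := qc μ)
    (qc_mono hμ).measurable.aemeasurable
    (f := fun y => y^2) ((measurable_id.pow_const 2).aestronglyMeasurable)
  rw [map_qc hμ] at h
  exact h.symm

lemma nu_Iio {u : ℝ} (hu : u ∈ Ioo (0:ℝ) 1) :
    ((volume.restrict (Ioo (0:ℝ) 1)) (Iio u)).toReal = u := by
  rw [Measure.restrict_apply' measurableSet_Ioo]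
  have : Iio u ∩ Ioo 0 1 = Ioo (0:ℝ) u := by
    ext x
    simp only [mem_inter_iff, mem_Iio, mem_Ioo]
    constructor
    · rintro ⟨h1, h2, h3⟩; exact ⟨h2, h1⟩
    · rintro ⟨h1, h2⟩; exact ⟨h2, h1, lt_trans h2 hu.2⟩
  rw [this]
  simp [ENNReal.toReal_ofReal hu.1.le]

lemma nu_Iic {v : ℝ} (hv : v ∈ Ioo (0:ℝ) 1) :
    ((volume.restrict (Ioo (0:ℝ) 1)) (Iic v)).toReal = v := by
  rw [Measure.restrict_apply' measurableSet_Ioo]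
  have : Iic v ∩ Ioo 0 1 = Ioc (0:ℝ) v := by
    ext x
    simp only [mem_inter_iff, mem_Iic, mem_Ioo, mem_Ioc]
    constructor
    · rintro ⟨h1, h2, h3⟩; exact ⟨h2, h1⟩
    · rintro ⟨h1, h2⟩; exact ⟨h2, h1, lt_of_le_of_lt h2 hv.2⟩
  rw [this]
  simp [ENNReal.toReal_ofReal hv.1.le]

lemma max_integral :
    ∫ p, max p.1 p.2 ∂(μ.prod μ) = 2 * ∫ x in Ioo (0:ℝ) 1, x * qc μ x := by
  set ν := volume.restrict (Ioo (0:ℝ) 1) with hν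
  have hprob : IsProbabilityMeasure ν := ⟨by simp [hν]⟩
  have hmeas : Measurable (qc μ) := (qc_mono hμ).measurable
  have hqc01 : ∀ x, |qc μ x| ≤ 1 := fun x =>
    abs_le.2 ⟨by linarith [(qc_mem hμ x).1], (qc_mem hμ x).2⟩
  -- rewrite product measure
  have hmap : μ.prod μ = (ν.prod ν).map (Prod.map (qc μ) (qc μ)) := by
    conv_lhs => rw [← map_qc hμ]
    rw [Measure.map_prod_map _ _ hmeas hmeas]
  rw [hmap, integral_map (hmeas.prodMap hmeas).aemeasurable
    (measurable_fst.max measurable_snd).aestronglyMeasurable]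
  simp only [Prod.map_fst, Prod.map_snd]
  -- split max into two indicators
  set g : ℝ × ℝ → ℝ := {p : ℝ × ℝ | p.2 < p.1}.indicator (fun p => qc μ p.1) with hg
  set h : ℝ × ℝ → ℝ := {p : ℝ × ℝ | p.1 ≤ p.2}.indicator (fun p => qc μ p.2) with hh
  have hsplit : ∀ p : ℝ × ℝ, max (qc μ p.1) (qc μ p.2) = g p + h p := by
    intro p
    simp only [hg, hh, indicator_apply, mem_setOf_eq]
    rcases lt_or_ge p.2 p.1 with hlt | hle
    · rw [if_pos hlt, if_neg hlt.not_ge, max_eq_left (qc_mono hμ hlt.le), add_zero]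
    · rw [if_neg hle.not_gt, if_pos hle, max_eq_right (qc_mono hμ hle), zero_add]
  have hset1 : MeasurableSet {p : ℝ × ℝ | p.2 < p.1} := measurableSet_lt measurable_snd measurable_fst
  have hset2 : MeasurableSet {p : ℝ × ℝ | p.1 ≤ p.2} := measurableSet_le measurable_fst measurable_snd
  have hgmeas : Measurable g := ((hmeas.comp measurable_fst).indicator hset1)
  have hhmeas : Measurable h := ((hmeas.comp measurable_snd).indicator hset2)
  have hgint : Integrable g (ν.prod ν) := by
    refine integrable_of_bdd hgmeas.aestronglyMeasurable (C := 1) (ae_of_all _ fun p => ?_)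
    simp only [hg, indicator_apply, mem_setOf_eq]
    rcases lt_or_ge p.2 p.1 with hlt | hle
    · rw [if_pos hlt]; exact hqc01 _
    · rw [if_neg hle.not_gt]; norm_num
  have hhint : Integrable h (ν.prod ν) := by
    refine integrable_of_bdd hhmeas.aestronglyMeasurable (C := 1) (ae_of_all _ fun p => ?_)
    simp only [hh, indicator_apply, mem_setOf_eq]
    rcases le_or_gt p.1 p.2 with hle | hlt
    · rw [if_pos hle]; exact hqc01 _
    · rw [if_neg hlt.not_ge]; norm_num
  calc ∫ p, max (qc μ p.1) (qc μ p.2) ∂(ν.prod ν)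
      = ∫ p, (g p + h p) ∂(ν.prod ν) := by
        exact integral_congr_ae (ae_of_all _ hsplit)
    _ = ∫ p, g p ∂(ν.prod ν) + ∫ p, h p ∂(ν.prod ν) := integral_add hgint hhint
    _ = 2 * ∫ x in Ioo (0:ℝ) 1, x * qc μ x := by
        have h1 : ∫ p, g p ∂(ν.prod ν) = ∫ x in Ioo (0:ℝ) 1, x * qc μ x := by
          rw [integral_prod _ hgint]
          refine setIntegral_congr_fun measurableSet_Ioo fun u hu => ?_
          have : (fun v => g (u, v)) = (Iio u).indicator (fun _ => qc μ u) := by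
            funext v
            simp only [hg, indicator_apply, mem_setOf_eq, mem_Iio]
          rw [this, integral_indicator_const _ measurableSet_Iio, measureReal_def, hν, nu_Iio hμ hu, smul_eq_mul]
        have h2 : ∫ p, h p ∂(ν.prod ν) = ∫ x in Ioo (0:ℝ) 1, x * qc μ x := by
          rw [integral_prod_symm _ hhint]
          refine setIntegral_congr_fun measurableSet_Ioo fun v hv => ?_
          have : (fun u => h (u, v)) = (Iic v).indicator (fun _ => qc μ v) := by
            funext u
            simp only [hh, indicator_apply, mem_setOf_eq, mem_Iic]
          rw [this, integral_indicator_const _ measurableSet_Iic, measureReal_def, hν, nu_Iic hμ hv, smul_eq_mul]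
        rw [h1, h2]; ring

end Stmt14Aux


open MeasureTheory Set

open ProbabilityTheory in
theorem stmt14 {Ω : Type*} [MeasurableSpace Ω] (P : Measure Ω) [IsProbabilityMeasure P]
    (Y1 Y : Ω → ℝ) (hY1 : Measurable Y1) (hY : Measurable Y)
    (hrange : ∀ᵐ ω ∂P, Y1 ω ∈ Set.Icc (0:ℝ) 1)
    (hcopy : Measure.map Y P = Measure.map Y1 P)
    (hindep : ProbabilityTheory.IndepFun Y1 Y P)
    (F : ℝ → ℝ) (hF : ∀ y, F y = (P {ω | Y1 ω ≤ y}).toReal)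
    (Q : ℝ → ℝ) (hQ : ∀ x ∈ Set.Ioo (0:ℝ) 1, Q x = sInf {y : ℝ | x ≤ F y}) :
    ∫ x in (0:ℝ)..1, (Q x - x)^2
      = 1/3 + ∫ ω, (Y1 ω)^2 ∂P - ∫ ω, max (Y1 ω) (Y ω) ∂P := by
  set μ := P.map Y1 with hμdef
  haveI hinst : IsProbabilityMeasure μ := Measure.isProbabilityMeasure_map hY1.aemeasurable
  have hμ : μ (Icc (0:ℝ) 1)ᶜ = 0 := by
    rw [hμdef, Measure.map_apply hY1 measurableSet_Icc.compl]
    rw [ae_iff] at hrange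
    convert hrange using 2
    rfl
  have hFc : ∀ y, F y = cdf μ y := by
    intro y
    rw [hF, cdf_eq_real, measureReal_def, hμdef, Measure.map_apply hY1 measurableSet_Iic]
    rfl
  have hQq : ∀ x ∈ Ioo (0:ℝ) 1, Q x = Stmt14Aux.qc μ x := by
    intro x hx
    rw [hQ x hx, Stmt14Aux.qc_eq hμ hx]
    congr 1
    ext y
    simp [hFc]
  rw [intervalIntegral.integral_of_le (by norm_num : (0:ℝ) ≤ 1),
    MeasureTheory.integral_Ioc_eq_integral_Ioo,
    setIntegral_congr_fun measurableSet_Ioo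
      (fun x hx => by dsimp only; rw [hQq x hx] : EqOn (fun x => (Q x - x)^2)
        (fun x => (Stmt14Aux.qc μ x - x)^2) (Ioo 0 1))]
  haveI hprob : IsProbabilityMeasure (volume.restrict (Ioo (0:ℝ) 1)) := ⟨by simp⟩
  have hmeas : Measurable (Stmt14Aux.qc μ) := (Stmt14Aux.qc_mono hμ).measurable
  have hqc01 : ∀ x, |Stmt14Aux.qc μ x| ≤ 1 := fun x =>
    abs_le.2 ⟨by linarith [(Stmt14Aux.qc_mem hμ x).1], (Stmt14Aux.qc_mem hμ x).2⟩
  have hae : ∀ᵐ x ∂(volume.restrict (Ioo (0:ℝ) 1)), x ∈ Ioo (0:ℝ) 1 :=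
    ae_restrict_mem measurableSet_Ioo
  have hint1 : Integrable (fun x => (Stmt14Aux.qc μ x)^2) (volume.restrict (Ioo (0:ℝ) 1)) := by
    refine Stmt14Aux.integrable_of_bdd ((hmeas.pow_const 2).aestronglyMeasurable)
      (C := 1) (ae_of_all _ fun x => ?_)
    rw [abs_pow]
    calc |Stmt14Aux.qc μ x| ^ 2 ≤ 1 ^ 2 := pow_le_pow_left₀ (abs_nonneg _) (hqc01 x) 2
      _ = 1 := one_pow 2
  have hint2 : Integrable (fun x => x * Stmt14Aux.qc μ x) (volume.restrict (Ioo (0:ℝ) 1)) := by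
    refine Stmt14Aux.integrable_of_bdd ((measurable_id.mul hmeas).aestronglyMeasurable)
      (C := 1) (hae.mono fun x hx => ?_)
    rw [abs_mul]
    calc |x| * |Stmt14Aux.qc μ x| ≤ 1 * 1 := by
          refine mul_le_mul ?_ (hqc01 x) (abs_nonneg _) (by norm_num)
          rw [abs_le]; constructor <;> [linarith [hx.1]; linarith [hx.2]]
      _ = 1 := by norm_num
  have hint3 : Integrable (fun x : ℝ => x^2) (volume.restrict (Ioo (0:ℝ) 1)) := by
    refine Stmt14Aux.integrable_of_bdd ((measurable_id.pow_const 2).aestronglyMeasurable)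
      (C := 1) (hae.mono fun x hx => ?_)
    rw [abs_pow]
    have hx1 : |x| ≤ 1 := by rw [abs_le]; constructor <;> [linarith [hx.1]; linarith [hx.2]]
    calc |x| ^ 2 ≤ 1 ^ 2 := pow_le_pow_left₀ (abs_nonneg _) hx1 2
      _ = 1 := one_pow 2
  have hexp : ∫ x in Ioo (0:ℝ) 1, (Stmt14Aux.qc μ x - x)^2
      = (∫ x in Ioo (0:ℝ) 1, (Stmt14Aux.qc μ x)^2)
        - 2 * (∫ x in Ioo (0:ℝ) 1, x * Stmt14Aux.qc μ x) + ∫ x in Ioo (0:ℝ) 1, x^2 := by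
    have heq : (fun x => (Stmt14Aux.qc μ x - x)^2)
        = fun x => ((Stmt14Aux.qc μ x)^2 - 2*(x * Stmt14Aux.qc μ x)) + x^2 := by
      funext x; ring
    have h12 : Integrable (fun x => (Stmt14Aux.qc μ x)^2 - 2*(x * Stmt14Aux.qc μ x))
        (volume.restrict (Ioo (0:ℝ) 1)) := hint1.sub (hint2.const_mul 2)
    have h2' : Integrable (fun x => 2*(x * Stmt14Aux.qc μ x))
        (volume.restrict (Ioo (0:ℝ) 1)) := hint2.const_mul 2
    rw [heq, integral_add h12 hint3, integral_sub hint1 h2', MeasureTheory.integral_const_mul]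
  have hx2 : ∫ x in Ioo (0:ℝ) 1, x^2 = 1/3 := by
    rw [← MeasureTheory.integral_Ioc_eq_integral_Ioo,
      ← intervalIntegral.integral_of_le (by norm_num : (0:ℝ) ≤ 1),
      integral_pow]
    norm_num
  have hmom : ∫ ω, (Y1 ω)^2 ∂P = ∫ y, y^2 ∂μ :=
    (integral_map hY1.aemeasurable ((measurable_id.pow_const 2).aestronglyMeasurable)).symm
  have hpair : P.map (fun ω => (Y1 ω, Y ω)) = μ.prod μ := by
    rw [(ProbabilityTheory.indepFun_iff_map_prod_eq_prod_map_map hY1.aemeasurable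
      hY.aemeasurable).mp hindep, hcopy]
  have hmax : ∫ ω, max (Y1 ω) (Y ω) ∂P = ∫ p : ℝ × ℝ, max p.1 p.2 ∂(μ.prod μ) := by
    rw [← hpair]
    exact (integral_map (hY1.prodMk hY).aemeasurable
      (measurable_fst.max measurable_snd).aestronglyMeasurable).symm
  rw [hexp, Stmt14Aux.second_moment hμ, hx2, hmom, hmax, Stmt14Aux.max_integral hμ]
  ring
end

section
/- Let X = {X(t), t ∈ ℝ^d} be a stochastically continuous random field whose marginal c.d.f. F_X is continuous and strictly increasing on the support. Suppose for each n there exists an admissible parameter λ̃_n with predictor g(λ̃_n, X(T_f)) = X(t̃_n) a.s., where t̃_n is the closest observation point to t and min_{j≤n} ‖t_j - t‖ → 0 as n → ∞. If λ̂_n minimizes the functional λ ↦ 2E[F_X(X(t) ∨ X̂_λ)] - E[F_X(X̂_λ)] over the admissible set, then the predictor X̂_{λ̂_n}(t) converges to X(t) in probability as n → ∞. -/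
open MeasureTheory Set Filter

theorem stmt18 {Ω : Type*} [MeasurableSpace Ω] (P : Measure Ω) [IsProbabilityMeasure P]
    {d : ℕ} (X : (Fin d → ℝ) → Ω → ℝ) (t : Fin d → ℝ)
    (hXm : ∀ s, Measurable (X s))
    -- stochastic continuity of the field at `t`
    (hsc : ∀ ε > (0:ℝ),
      Tendsto (fun s => P {ω | ε ≤ |X s ω - X t ω|}) (nhds t) (nhds 0))
    -- common marginal c.d.f., continuous and strictly increasing
    (F : ℝ → ℝ) (hF : ∀ s x, F x = (P {ω | X s ω ≤ x}).toReal)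
    (hFc : Continuous F) (hFmono : StrictMono F)
    -- admissible predictors for sample size `n`
    (Λ : ℕ → Set (Ω → ℝ)) (hΛm : ∀ n, ∀ Z ∈ Λ n, Measurable Z)
    -- the closest observation points converge to `t` and are admissible predictors
    (s : ℕ → (Fin d → ℝ)) (hs : Tendsto s atTop (nhds t))
    (hsin : ∀ n, X (s n) ∈ Λ n)
    -- the excursion predictor minimizes the target functional over the admissible set
    (Xhat : ℕ → Ω → ℝ) (hXhatm : ∀ n, Measurable (Xhat n))
    (hmem : ∀ n, Xhat n ∈ Λ n)
    (hmin : ∀ n, ∀ Z ∈ Λ n,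
      2 * ∫ ω, F (max (X t ω) (Xhat n ω)) ∂P - ∫ ω, F (Xhat n ω) ∂P ≤
        2 * ∫ ω, F (max (X t ω) (Z ω)) ∂P - ∫ ω, F (Z ω) ∂P) :
    -- the predictor converges to `X t` in probability
    ∀ ε > (0:ℝ),
      Tendsto (fun n => P {ω | ε ≤ |Xhat n ω - X t ω|}) atTop (nhds 0) := by
  -- bounds for F
  have hF0 : ∀ x, 0 ≤ F x := fun x => (hF t x) ▸ ENNReal.toReal_nonneg
  have hF1 : ∀ x, F x ≤ 1 := by
    intro x
    rw [hF t x]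
    exact ENNReal.toReal_le_of_le_ofReal zero_le_one (by simpa using prob_le_one (μ := P))
  -- integrability of F ∘ Z for measurable Z
  have hint : ∀ (Z : Ω → ℝ), Measurable Z → Integrable (fun ω => F (Z ω)) P := by
    intro Z hZ
    refine (integrable_const (1:ℝ)).mono' ((hFc.measurable.comp hZ).aestronglyMeasurable) ?_
    filter_upwards with ω
    rw [Real.norm_eq_abs, abs_of_nonneg (hF0 _)]
    exact hF1 _
  set Y := X t with hYdef
  have hYm : Measurable Y := hXm t
  have hintabs : ∀ (Z : Ω → ℝ), Measurable Z →
      Integrable (fun ω => |F (Y ω) - F (Z ω)|) P :=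
    fun Z hZ => ((hint Y hYm).sub (hint Z hZ)).abs
  -- the absolute-difference identity
  have habs : ∀ (Z : Ω → ℝ), Measurable Z →
      ∫ ω, |F (Y ω) - F (Z ω)| ∂P
        = 2 * ∫ ω, F (max (Y ω) (Z ω)) ∂P - ∫ ω, F (Z ω) ∂P - ∫ ω, F (Y ω) ∂P := by
    intro Z hZ
    have hptw : (fun ω => |F (Y ω) - F (Z ω)|)
        = fun ω => 2 * F (max (Y ω) (Z ω)) - F (Z ω) - F (Y ω) := by
      funext ω
      rcases le_total (Y ω) (Z ω) with h | h
      · have hFh : F (Y ω) ≤ F (Z ω) := hFmono.monotone h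
        rw [max_eq_right h, abs_of_nonpos (by linarith)]; ring
      · have hFh : F (Z ω) ≤ F (Y ω) := hFmono.monotone h
        rw [max_eq_left h, abs_of_nonneg (by linarith)]; ring
    have hintmax : Integrable (fun ω => F (max (Y ω) (Z ω))) P :=
      hint _ (hYm.max hZ)
    rw [hptw,
      integral_sub (f := fun ω => 2 * F (max (Y ω) (Z ω)) - F (Z ω))
        (g := fun ω => F (Y ω)) ((hintmax.const_mul 2).sub (hint Z hZ)) (hint Y hYm),
      integral_sub (f := fun ω => 2 * F (max (Y ω) (Z ω))) (g := fun ω => F (Z ω))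
        (hintmax.const_mul 2) (hint Z hZ),
      integral_const_mul]
  -- the key comparison from minimality
  have hkey : ∀ n, ∫ ω, |F (Y ω) - F (Xhat n ω)| ∂P
      ≤ ∫ ω, |F (Y ω) - F (X (s n) ω)| ∂P := by
    intro n
    rw [habs _ (hXhatm n), habs _ (hXm (s n))]
    have := hmin n (X (s n)) (hsin n)
    linarith
  -- small tails of Y
  have htail : ∀ c : ℝ, 0 < c → ∃ M : ℝ, 0 < M ∧ P {ω | M < |Y ω|} ≤ ENNReal.ofReal c := by
    intro c hc
    have hanti : Antitone (fun n : ℕ => {ω | (n:ℝ) < |Y ω|}) := by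
      intro m n hmn ω hω
      simp only [mem_setOf_eq] at hω ⊢
      have : (m:ℝ) ≤ (n:ℝ) := by exact_mod_cast hmn
      linarith
    have hiInter : ⋂ n : ℕ, {ω | (n:ℝ) < |Y ω|} = ∅ := by
      ext ω
      simp only [mem_iInter, mem_setOf_eq, mem_empty_iff_false, iff_false, not_forall, not_lt]
      obtain ⟨n, hn⟩ := exists_nat_gt |Y ω|
      exact ⟨n, hn.le⟩
    have htd := MeasureTheory.tendsto_measure_iInter_atTop
      (μ := P) (s := fun n : ℕ => {ω | (n:ℝ) < |Y ω|})
      (fun n => (measurableSet_lt measurable_const hYm.abs).nullMeasurableSet)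
      hanti ⟨0, measure_ne_top _ _⟩
    rw [hiInter, measure_empty] at htd
    have hev := htd.eventually_lt_const (ENNReal.ofReal_pos.2 hc)
    obtain ⟨n, hn⟩ := hev.exists
    refine ⟨(n:ℝ) + 1, by positivity, le_trans (measure_mono ?_) hn.le⟩
    intro ω hω
    simp only [mem_setOf_eq] at hω ⊢
    linarith
  -- the comparison sequence converges in L¹ sense
  have hE : ∀ r : ℝ, 0 < r →
      ∀ᶠ n in atTop, ∫ ω, |F (Y ω) - F (X (s n) ω)| ∂P ≤ r := by
    intro r hr
    obtain ⟨M, hM0, hMle⟩ := htail (r/4) (by positivity)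
    have hMr : (P {ω | M < |Y ω|}).toReal ≤ r/4 :=
      ENNReal.toReal_le_of_le_ofReal (by positivity) hMle
    have huc := (isCompact_Icc (a := -M - 1) (b := M + 1)).uniformContinuousOn_of_continuous
      hFc.continuousOn
    rw [Metric.uniformContinuousOn_iff] at huc
    obtain ⟨δ₀, hδ₀, hδ⟩ := huc (r/4) (by positivity)
    set δ' := min δ₀ 1 with hδ'def
    have hδ'0 : 0 < δ' := lt_min hδ₀ one_pos
    have hδ'1 : δ' ≤ 1 := min_le_right _ _
    have hBn : ∀ᶠ n in atTop, (P {ω | δ' ≤ |X (s n) ω - Y ω|}).toReal ≤ r/4 := by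
      have h1 := ((hsc δ' hδ'0).comp hs).eventually_lt_const
        (ENNReal.ofReal_pos.2 (show (0:ℝ) < r/4 by positivity))
      filter_upwards [h1] with n hn
      exact ENNReal.toReal_le_of_le_ofReal (by positivity) hn.le
    filter_upwards [hBn] with n hn
    set A := {ω | M < |Y ω|} with hAdef
    set B := {ω | δ' ≤ |X (s n) ω - Y ω|} with hBdef
    have hAm : MeasurableSet A := measurableSet_lt measurable_const hYm.abs
    have hBm : MeasurableSet B := measurableSet_le measurable_const ((hXm (s n)).sub hYm).abs
    have hpt : ∀ ω, |F (Y ω) - F (X (s n) ω)|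
        ≤ A.indicator (fun _ => (1:ℝ)) ω + B.indicator (fun _ => (1:ℝ)) ω + r/4 := by
      intro ω
      have hb : |F (Y ω) - F (X (s n) ω)| ≤ 1 := by
        rw [abs_le]
        constructor <;> [skip; skip] <;>
          · have := hF0 (Y ω); have := hF1 (Y ω)
            have := hF0 (X (s n) ω); have := hF1 (X (s n) ω)
            linarith
      have hindnn : ∀ (S : Set Ω), 0 ≤ S.indicator (fun _ => (1:ℝ)) ω :=
        fun S => Set.indicator_nonneg (fun _ _ => zero_le_one) ω
      by_cases hA : ω ∈ A
      · have hA1 : A.indicator (fun _ => (1:ℝ)) ω = 1 := Set.indicator_of_mem hA _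
        have hBnn := hindnn B
        linarith
      · by_cases hB : ω ∈ B
        · have hB1 : B.indicator (fun _ => (1:ℝ)) ω = 1 := Set.indicator_of_mem hB _
          have hAnn := hindnn A
          linarith
        · have hY : |Y ω| ≤ M := le_of_not_gt hA
          have hW : |X (s n) ω - Y ω| < δ' := lt_of_not_ge hB
          have h1 := abs_le.1 hY
          have h2 := abs_lt.1 hW
          have hYmem : Y ω ∈ Icc (-M - 1) (M + 1) := ⟨by linarith, by linarith⟩
          have hWmem : X (s n) ω ∈ Icc (-M - 1) (M + 1) :=
            ⟨by linarith, by linarith⟩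
          have hdist : dist (Y ω) (X (s n) ω) < δ₀ := by
            rw [Real.dist_eq, abs_sub_comm]
            exact lt_of_lt_of_le hW (min_le_left _ _)
          have := hδ (Y ω) hYmem (X (s n) ω) hWmem hdist
          rw [Real.dist_eq] at this
          have := hindnn A
          have := hindnn B
          linarith
    have hintR : Integrable
        (fun ω => A.indicator (fun _ => (1:ℝ)) ω + B.indicator (fun _ => (1:ℝ)) ω + r/4) P := by
      exact (((integrable_const (1:ℝ)).indicator hAm).add
        ((integrable_const (1:ℝ)).indicator hBm)).add (integrable_const _)
    have hmono := integral_mono (hintabs _ (hXm (s n))) hintR hpt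
    have hRHS : ∫ ω, A.indicator (fun _ => (1:ℝ)) ω + B.indicator (fun _ => (1:ℝ)) ω + r/4 ∂P
        = (P A).toReal + (P B).toReal + r/4 := by
      rw [integral_add
          (f := fun ω => A.indicator (fun _ => (1:ℝ)) ω + B.indicator (fun _ => (1:ℝ)) ω)
          (g := fun _ => r/4)
          (((integrable_const (1:ℝ)).indicator hAm).add
            ((integrable_const (1:ℝ)).indicator hBm)) (integrable_const _),
        integral_add (f := fun ω => A.indicator (fun _ => (1:ℝ)) ω)
          (g := fun ω => B.indicator (fun _ => (1:ℝ)) ω)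
          ((integrable_const (1:ℝ)).indicator hAm)
          ((integrable_const (1:ℝ)).indicator hBm),
        integral_indicator_const _ hAm, integral_indicator_const _ hBm, integral_const]
      simp [measure_univ, Measure.real]
    rw [hRHS] at hmono
    linarith
  -- start the main argument
  intro ε hε
  rw [ENNReal.tendsto_nhds_zero]
  intro η hη
  obtain ⟨c, hc0, hcη⟩ : ∃ c : ℝ, 0 < c ∧ ENNReal.ofReal c + ENNReal.ofReal c ≤ η := by
    rcases eq_or_ne η ⊤ with h | h
    · exact ⟨1, one_pos, by simp [h]⟩
    · have hpos : 0 < η.toReal := ENNReal.toReal_pos hη.ne' h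
      refine ⟨η.toReal / 2, by positivity, ?_⟩
      rw [← ENNReal.ofReal_add (by positivity) (by positivity)]
      rw [show η.toReal / 2 + η.toReal / 2 = η.toReal by ring, ENNReal.ofReal_toReal h]
  obtain ⟨M, hM0, hMc⟩ := htail c hc0
  -- a uniform positive modulus δ on [-M, M]
  set φ : ℝ → ℝ := fun y => min (F (y + ε) - F y) (F y - F (y - ε)) with hφdef
  have hφc : Continuous φ :=
    ((hFc.comp (continuous_id.add continuous_const)).sub hFc).min
      (hFc.sub (hFc.comp (continuous_id.sub continuous_const)))
  have hφpos : ∀ y, 0 < φ y := fun y =>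
    lt_min (sub_pos.2 (hFmono (by linarith))) (sub_pos.2 (hFmono (by linarith)))
  obtain ⟨y0, hy0K, hy0min⟩ := isCompact_Icc.exists_isMinOn
    (nonempty_Icc.2 (by linarith : -M ≤ M)) hφc.continuousOn
  set δ := φ y0 with hδdef
  have hδ0 : 0 < δ := hφpos y0
  have hptδ : ∀ (x y : ℝ), |y| ≤ M → ε ≤ |x - y| → δ ≤ |F x - F y| := by
    intro x y hy hxy
    have hyK : y ∈ Icc (-M) M := mem_Icc.2 (abs_le.1 hy)
    have hδy : δ ≤ φ y := hy0min hyK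
    rcases le_or_gt y x with h | h
    · have hx : y + ε ≤ x := by
        rw [abs_of_nonneg (sub_nonneg.2 h)] at hxy; linarith
      have h1 : F (y + ε) ≤ F x := hFmono.monotone hx
      have h2 : F y ≤ F x := hFmono.monotone h
      rw [abs_of_nonneg (by linarith)]
      have h3 : φ y ≤ F (y + ε) - F y := min_le_left _ _
      linarith
    · have hx : x ≤ y - ε := by
        rw [abs_of_nonpos (by linarith)] at hxy; linarith
      have h1 : F x ≤ F (y - ε) := hFmono.monotone hx
      have h2 : F x ≤ F y := hFmono.monotone h.le
      rw [abs_of_nonpos (by linarith)]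
      have h3 : φ y ≤ F y - F (y - ε) := min_le_right _ _
      linarith
  -- conclude
  have hEδ := hE (δ * c) (by positivity)
  filter_upwards [hEδ] with n hn
  have hmarkov : P {ω | δ ≤ |F (Y ω) - F (Xhat n ω)|} ≤ ENNReal.ofReal c := by
    have hmk := mul_meas_ge_le_integral_of_nonneg
      (μ := P) (f := fun ω => |F (Y ω) - F (Xhat n ω)|)
      (ae_of_all _ fun ω => abs_nonneg _) (hintabs _ (hXhatm n)) δ
    have hDE := le_trans (hkey n) hn
    rw [ENNReal.le_ofReal_iff_toReal_le (measure_ne_top _ _) hc0.le]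
    have hle : δ * (P {ω | δ ≤ |F (Y ω) - F (Xhat n ω)|}).toReal ≤ δ * c :=
      le_trans hmk hDE
    exact (mul_le_mul_iff_right₀ hδ0).1 hle
  have hsub : {ω | ε ≤ |Xhat n ω - Y ω|}
      ⊆ {ω | M < |Y ω|} ∪ {ω | δ ≤ |F (Y ω) - F (Xhat n ω)|} := by
    intro ω hω
    by_cases hA : M < |Y ω|
    · exact Or.inl hA
    · right
      have := hptδ (Xhat n ω) (Y ω) (le_of_not_gt hA) hω
      rwa [abs_sub_comm] at this
  calc P {ω | ε ≤ |Xhat n ω - Y ω|}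
      ≤ P ({ω | M < |Y ω|} ∪ {ω | δ ≤ |F (Y ω) - F (Xhat n ω)|}) := measure_mono hsub
    _ ≤ P {ω | M < |Y ω|} + P {ω | δ ≤ |F (Y ω) - F (Xhat n ω)|} := measure_union_le _ _
    _ ≤ ENNReal.ofReal c + ENNReal.ofReal c := add_le_add hMc hmarkov
    _ ≤ η := hcη
end

section
/- Let Λ ⊆ ℝ^n and suppose X̂_{λ_k} → +∞ in probability for every sequence λ_k ∈ Λ with |λ_k| → ∞, where X̂_λ takes values in ℝ and F_X is a continuous c.d.f. Then Φ(λ_k) := 2E[F_X(X ∨ X̂_{λ_k})] - E[F_X(X̂_{λ_k})] → 1 as |λ_k| → ∞. Consequently, if there exists λ_0 ∈ Λ with Φ(λ_0) < 1, there exists M > 0 such that inf_{λ∈Λ} Φ(λ) = inf_{λ∈Λ, |λ|≤M} Φ(λ). -/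
open MeasureTheory Set Filter

/-- The target functional `Φ(λ) = 2 E[F(X ∨ X̂_λ)] - E[F(X̂_λ)]`. -/
noncomputable def targetPhi {Ω : Type*} [MeasurableSpace Ω] (P : Measure Ω)
    (X : Ω → ℝ) (F : ℝ → ℝ) {n : ℕ} (Xhat : EuclideanSpace ℝ (Fin n) → Ω → ℝ)
    (lam : EuclideanSpace ℝ (Fin n)) : ℝ :=
  2 * ∫ ω, F (max (X ω) (Xhat lam ω)) ∂P - ∫ ω, F (Xhat lam ω) ∂P

lemma aux_integrable {Ω : Type*} [MeasurableSpace Ω] (P : Measure Ω) [IsProbabilityMeasure P]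
    (F : ℝ → ℝ) (hFc : Continuous F) (hF0 : ∀ x, 0 ≤ F x) (hF1 : ∀ x, F x ≤ 1)
    (g : Ω → ℝ) (hg : Measurable g) : Integrable (fun ω => F (g ω)) P := by
  refine (integrable_const (1:ℝ)).mono'
    ((hFc.measurable.comp hg).aestronglyMeasurable) (ae_of_all _ fun ω => ?_)
  rw [Real.norm_eq_abs, abs_le]
  exact ⟨by linarith [hF0 (g ω)], hF1 _⟩

lemma aux_tendsto {Ω : Type*} [MeasurableSpace Ω] (P : Measure Ω) [IsProbabilityMeasure P]
    (F : ℝ → ℝ) (hFmono : Monotone F) (hFc : Continuous F)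
    (hF0 : ∀ x, 0 ≤ F x) (hF1 : ∀ x, F x ≤ 1) (hFtop : Tendsto F atTop (nhds 1))
    (Y : ℕ → Ω → ℝ) (hYm : ∀ k, Measurable (Y k))
    (hY : ∀ c : ℝ, Tendsto (fun k => P {ω | Y k ω ≤ c}) atTop (nhds 0)) :
    Tendsto (fun k => ∫ ω, F (Y k ω) ∂P) atTop (nhds 1) := by
  have hint : ∀ k, Integrable (fun ω => F (Y k ω)) P :=
    fun k => aux_integrable P F hFc hF0 hF1 (Y k) (hYm k)
  rw [Metric.tendsto_atTop]
  intro ε hε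
  have hev : ∀ᶠ x in atTop, 1 - ε/2 < F x :=
    hFtop.eventually (eventually_gt_nhds (by linarith))
  obtain ⟨c, hc⟩ := eventually_atTop.mp hev
  have hmeas_to0 : Tendsto (fun k => (P {ω | Y k ω ≤ c}).toReal) atTop (nhds 0) := by
    have h := (ENNReal.tendsto_toReal (by simp : (0:ENNReal) ≠ ⊤)).comp (hY c)
    simpa [Function.comp_def] using h
  obtain ⟨N, hN⟩ := Metric.tendsto_atTop.mp hmeas_to0 (ε/2) (by linarith)
  refine ⟨N, fun k hk => ?_⟩
  set p := (P {ω | Y k ω ≤ c}).toReal with hp_def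
  have hp : p < ε/2 := by
    have := hN k hk
    rwa [Real.dist_eq, sub_zero, abs_of_nonneg ENNReal.toReal_nonneg] at this
  have hmsb : MeasurableSet {ω | Y k ω ≤ c} := measurableSet_le (hYm k) measurable_const
  have hind : Integrable (Set.indicator {ω | Y k ω ≤ c} (fun _ => (1:ℝ))) P :=
    (integrable_const (1:ℝ)).indicator hmsb
  have hle : ∀ ω, F c - Set.indicator {ω | Y k ω ≤ c} (fun _ => (1:ℝ)) ω ≤ F (Y k ω) := by
    intro ω
    simp only [Set.indicator_apply, Set.mem_setOf_eq]
    by_cases h : Y k ω ≤ c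
    · rw [if_pos h]
      linarith [hF1 c, hF0 (Y k ω)]
    · rw [if_neg h, sub_zero]
      exact hFmono (le_of_not_ge h)
  have hlow : F c - p ≤ ∫ ω, F (Y k ω) ∂P := by
    have hgint : Integrable
        (fun ω => F c - Set.indicator {ω | Y k ω ≤ c} (fun _ => (1:ℝ)) ω) P := by
      exact (integrable_const (F c)).sub hind
    have hmono := integral_mono hgint (hint k) hle
    have heq : ∫ ω, (F c - Set.indicator {ω | Y k ω ≤ c} (fun _ => (1:ℝ)) ω) ∂P
        = F c - p := by
      rw [integral_sub (integrable_const _) hind, integral_const,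
        integral_indicator_const _ hmsb]
      simp [hp_def, measureReal_def]
    rwa [heq] at hmono
  have hup : ∫ ω, F (Y k ω) ∂P ≤ 1 := by
    have h := integral_mono (hint k) (integrable_const (1:ℝ)) (fun ω => hF1 _)
    simp only [integral_const, measure_univ, ENNReal.toReal_one, probReal_univ, smul_eq_mul,
      one_mul, mul_one] at h
    exact h
  have hFc' : 1 - ε/2 < F c := hc c le_rfl
  rw [Real.dist_eq, abs_of_nonpos (by linarith)]
  linarith

theorem stmt19 {Ω : Type*} [MeasurableSpace Ω] (P : Measure Ω) [IsProbabilityMeasure P]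
    {n : ℕ} (Λ : Set (EuclideanSpace ℝ (Fin n)))
    (X : Ω → ℝ) (hX : Measurable X)
    (Xhat : EuclideanSpace ℝ (Fin n) → Ω → ℝ) (hXhatm : ∀ lam, Measurable (Xhat lam))
    -- `F` is a continuous c.d.f.
    (F : ℝ → ℝ) (hFmono : Monotone F) (hFc : Continuous F)
    (hF0 : ∀ x, 0 ≤ F x) (hF1 : ∀ x, F x ≤ 1)
    (hFbot : Tendsto F atBot (nhds 0)) (hFtop : Tendsto F atTop (nhds 1))
    -- predictors diverge to `+∞` in probability as `|λ| → ∞` along `Λ`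
    (hdiv : ∀ lam : ℕ → EuclideanSpace ℝ (Fin n), (∀ k, lam k ∈ Λ) →
      Tendsto (fun k => ‖lam k‖) atTop atTop →
      ∀ c : ℝ, Tendsto (fun k => P {ω | Xhat (lam k) ω ≤ c}) atTop (nhds 0)) :
    -- (1) `Φ(λ_k) → 1` along any such sequence
    (∀ lam : ℕ → EuclideanSpace ℝ (Fin n), (∀ k, lam k ∈ Λ) →
      Tendsto (fun k => ‖lam k‖) atTop atTop →
      Tendsto (fun k => targetPhi P X F Xhat (lam k)) atTop (nhds 1)) ∧
    -- (2) the minimization can be restricted to a bounded set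
    ((∃ lam0 ∈ Λ, targetPhi P X F Xhat lam0 < 1) →
      ∃ M > (0:ℝ),
        sInf (targetPhi P X F Xhat '' Λ)
          = sInf (targetPhi P X F Xhat '' (Λ ∩ {lam | ‖lam‖ ≤ M}))) := by
  have part1 : ∀ lam : ℕ → EuclideanSpace ℝ (Fin n), (∀ k, lam k ∈ Λ) →
      Tendsto (fun k => ‖lam k‖) atTop atTop →
      Tendsto (fun k => targetPhi P X F Xhat (lam k)) atTop (nhds 1) := by
    intro lam hmem hnorm
    have h2 : Tendsto (fun k => ∫ ω, F (Xhat (lam k) ω) ∂P) atTop (nhds 1) :=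
      aux_tendsto P F hFmono hFc hF0 hF1 hFtop _ (fun k => hXhatm _) (hdiv lam hmem hnorm)
    have h1 : Tendsto (fun k => ∫ ω, F (max (X ω) (Xhat (lam k) ω)) ∂P) atTop (nhds 1) := by
      refine aux_tendsto P F hFmono hFc hF0 hF1 hFtop _
        (fun k => hX.max (hXhatm _)) (fun c => ?_)
      have hsub : ∀ k, P {ω | max (X ω) (Xhat (lam k) ω) ≤ c} ≤ P {ω | Xhat (lam k) ω ≤ c} := by
        intro k
        refine measure_mono (fun ω hω => ?_)
        simp only [Set.mem_setOf_eq] at hω ⊢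
        exact le_trans (le_max_right _ _) hω
      exact tendsto_of_tendsto_of_tendsto_of_le_of_le tendsto_const_nhds
        (hdiv lam hmem hnorm c) (fun k => zero_le) hsub
    have : Tendsto (fun k => targetPhi P X F Xhat (lam k)) atTop (nhds (2 * 1 - 1)) := by
      unfold targetPhi
      exact (h1.const_mul 2).sub h2
    have h21 : (2:ℝ) * 1 - 1 = 1 := by norm_num
    rwa [h21] at this
  refine ⟨part1, ?_⟩
  rintro ⟨lam0, hlam0, hlt⟩
  -- Φ is bounded below by -1
  have hΦlb : ∀ lam, (-1:ℝ) ≤ targetPhi P X F Xhat lam := by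
    intro lam
    unfold targetPhi
    have h1 : 0 ≤ ∫ ω, F (max (X ω) (Xhat lam ω)) ∂P :=
      integral_nonneg (fun ω => hF0 _)
    have h2 : ∫ ω, F (Xhat lam ω) ∂P ≤ 1 := by
      have h := integral_mono (aux_integrable P F hFc hF0 hF1 _ (hXhatm lam))
        (integrable_const (1:ℝ)) (fun ω => hF1 _)
      simp only [integral_const, measure_univ, ENNReal.toReal_one, probReal_univ, smul_eq_mul,
        one_mul, mul_one] at h
      exact h
    linarith
  have claim : ∃ M : ℝ, 0 < M ∧ ‖lam0‖ ≤ M ∧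
      ∀ lam ∈ Λ, M < ‖lam‖ → targetPhi P X F Xhat lam0 ≤ targetPhi P X F Xhat lam := by
    by_contra hc
    push_neg at hc
    have hex : ∀ k : ℕ, ∃ lam ∈ Λ, (max ((k:ℝ)+1) (‖lam0‖+1)) < ‖lam‖ ∧
        targetPhi P X F Xhat lam < targetPhi P X F Xhat lam0 := by
      intro k
      exact hc (max ((k:ℝ)+1) (‖lam0‖+1)) (lt_of_lt_of_le (by positivity) (le_max_left _ _))
        (le_trans (by linarith) (le_max_right _ _))
    choose f hf1 hf2 hf3 using hex
    have hfn : Tendsto (fun k => ‖f k‖) atTop atTop := by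
      refine tendsto_atTop_mono (fun k => ?_) tendsto_natCast_atTop_atTop
      have := hf2 k
      have h1 : ((k:ℝ)+1) ≤ max ((k:ℝ)+1) (‖lam0‖+1) := le_max_left _ _
      linarith
    have hlim := part1 f hf1 hfn
    have h1le : (1:ℝ) ≤ targetPhi P X F Xhat lam0 :=
      le_of_tendsto' hlim (fun k => (hf3 k).le)
    linarith
  obtain ⟨M, hM0, hMlam0, hMprop⟩ := claim
  refine ⟨M, hM0, ?_⟩
  have hbddS : BddBelow (targetPhi P X F Xhat '' Λ) := by
    refine ⟨-1, ?_⟩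
    rintro y ⟨lam, _, rfl⟩
    exact hΦlb lam
  have hbddT : BddBelow (targetPhi P X F Xhat '' (Λ ∩ {lam | ‖lam‖ ≤ M})) :=
    hbddS.mono (Set.image_mono Set.inter_subset_left)
  have hTmem : targetPhi P X F Xhat lam0 ∈
      targetPhi P X F Xhat '' (Λ ∩ {lam | ‖lam‖ ≤ M}) :=
    ⟨lam0, ⟨hlam0, hMlam0⟩, rfl⟩
  apply le_antisymm
  · exact csInf_le_csInf hbddS ⟨_, hTmem⟩ (Set.image_mono Set.inter_subset_left)
  · refine le_csInf ⟨_, Set.mem_image_of_mem _ hlam0⟩ ?_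
    rintro y ⟨lam, hlam, rfl⟩
    by_cases h : ‖lam‖ ≤ M
    · exact csInf_le hbddT ⟨lam, ⟨hlam, h⟩, rfl⟩
    · exact le_trans (csInf_le hbddT hTmem) (hMprop lam hlam (lt_of_not_ge h))
end
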